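/- arXiv:2405.06763 — 4 statements merged into one kernel-verified Lean document; each statement's English description precedes it below -/
import Mathlib

section
/- Let L ≥ 1 be a natural number and ψ ∈ ℝ^L a fixed vector. For each n ∈ ℕ let (Ω_n, P_n) be a probability space carrying a random vector ψ̂_n : Ω_n → ℝ^L, deterministic scales σ_n ∈ ℝ^L with σ_{n,l} > 0 for every coordinate l, and a family (G_{n,m})_{m∈ℕ} of ℝ^L-valued random vectors whose coordinates (G_{n,m,l})_{m,l} are i.i.d. standard Gaussian N(0,1) and such that the family (G_{n,m})_m is independent of ψ̂_n. Define the resampled statistics ψ̂_n^{[m]} := ψ̂_n + σ_n ⊙ G_{n,m}, where ⊙ is the coordinatewise product (so that, given the data, the ψ̂_n^{[m]} are i.i.d. N(ψ̂_n, σ_n)). Assume that for every l ∈ {1,…,L} and every z > 0, limsup_{n→∞} P_n( |ψ̂_{n,l} − ψ_l| / σ_{n,l} ≥ z ) ≤ 2(1 − Φ(z)). Fix ν with 0 < ν ≤ 1/2, let z_ν > 0 satisfy Φ(z_ν) = 1 − ν/(2L), and set c(ν) := (2π)^{−L/2} exp(−(L/2) z_ν²) and err_n(M, ν) := (1/2)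 (2 log n / (c(ν) M))^{1/L}. Then liminf_{n→∞} liminf_{M→∞} P_n( min_{1≤m≤M} max_{1≤l≤L} |ψ̂_{n,l}^{[m]} − ψ_l| / σ_{n,l} ≤ err_n(M, ν) ) ≥ 1 − ν. -/
open MeasureTheory ProbabilityTheory Real Filter

/-- The cumulative distribution function of the standard Gaussian measure `N(0,1)` on `ℝ`. -/
noncomputable def stdGaussianCDF (x : ℝ) : ℝ :=
  ProbabilityTheory.cdf (ProbabilityTheory.gaussianReal 0 1) x

set_option maxHeartbeats 1000000

lemma aux_gauss_icc (t e Z : ℝ) (he : 0 ≤ e) (hZ : 0 ≤ Z) (ht : |t| ≤ Z) :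
    ENNReal.ofReal (2 * e * gaussianPDFReal 0 1 (Z + e)) ≤
      gaussianReal 0 1 (Set.Icc (t - e) (t + e)) := by
  rw [gaussianReal_apply 0 one_ne_zero]
  have hpt : ∀ x ∈ Set.Icc (t - e) (t + e),
      ENNReal.ofReal (gaussianPDFReal 0 1 (Z + e)) ≤ gaussianPDF 0 1 x := by
    intro x hx
    refine ENNReal.ofReal_le_ofReal ?_
    unfold gaussianPDFReal
    have hxabs : |x| ≤ Z + e := by
      have h1 : |x - t| ≤ e := abs_le.2 ⟨by linarith [hx.1], by linarith [hx.2]⟩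
      calc |x| = |t + (x - t)| := by ring_nf
        _ ≤ |t| + |x - t| := abs_add_le _ _
        _ ≤ Z + e := add_le_add ht h1
    have hsq : (x - 0) ^ 2 ≤ (Z + e - 0) ^ 2 := by
      simp only [sub_zero]
      exact sq_le_sq' (by linarith [abs_le.1 hxabs]) (abs_le.1 hxabs).2
    gcongr
  calc ENNReal.ofReal (2 * e * gaussianPDFReal 0 1 (Z + e))
      = ENNReal.ofReal (gaussianPDFReal 0 1 (Z + e)) * volume (Set.Icc (t - e) (t + e)) := by
        rw [Real.volume_Icc]
        rw [← ENNReal.ofReal_mul (gaussianPDFReal_nonneg _ _ _)]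
        ring_nf
    _ ≤ ∫⁻ x in Set.Icc (t - e) (t + e), gaussianPDF 0 1 x := by
        rw [← setLIntegral_const]
        exact setLIntegral_mono (measurable_gaussianPDF 0 1) hpt

lemma aux_base_le_one (e Z : ℝ) (he : 0 ≤ e) (hZ : 0 ≤ Z) :
    2 * e * gaussianPDFReal 0 1 (Z + e) ≤ 1 := by
  have h := aux_gauss_icc 0 e Z he hZ (by simpa using hZ)
  have h2 : gaussianReal 0 1 (Set.Icc (0 - e) (0 + e)) ≤ 1 := prob_le_one
  exact ENNReal.ofReal_le_one.mp (h.trans h2)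

lemma aux_key {L : ℕ} {Θ : Type*} [MeasurableSpace Θ] (Q : Measure Θ)
    [IsProbabilityMeasure Q]
    (f : ℕ × Fin L → Θ → ℝ) (hf : ∀ p, Measurable (f p))
    (hindep : iIndepFun f Q)
    (hgauss : ∀ p, Measure.map (f p) Q = gaussianReal 0 1)
    (t : Fin L → ℝ) (Z e : ℝ) (hZ : 0 ≤ Z) (he : 0 ≤ e) (ht : ∀ l, |t l| ≤ Z) (M : ℕ) :
    Q {θ | ∀ m, 1 ≤ m → m ≤ M → ¬ ∀ l, |f (m, l) θ - t l| ≤ e}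
      ≤ ENNReal.ofReal ((1 - (2 * e * gaussianPDFReal 0 1 (Z + e)) ^ L) ^ M) := by
  classical
  set q0 : ℝ := 2 * e * gaussianPDFReal 0 1 (Z + e) with hq0def
  have hq0 : 0 ≤ q0 := by
    have := gaussianPDFReal_nonneg 0 1 (Z + e); positivity
  have hq1 : q0 ≤ 1 := aux_base_le_one e Z he hZ
  have hqL0 : 0 ≤ q0 ^ L := pow_nonneg hq0 L
  have hqL1 : q0 ^ L ≤ 1 := pow_le_one₀ hq0 hq1
  -- hit set for block m
  have hitmeas : ∀ m : ℕ, MeasurableSet {θ | ∀ l, |f (m, l) θ - t l| ≤ e} := by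
    intro m
    have : {θ | ∀ l, |f (m, l) θ - t l| ≤ e}
        = ⋂ l, (f (m, l)) ⁻¹' Set.Icc (t l - e) (t l + e) := by
      ext θ; simp [abs_le, Set.mem_iInter, sub_le_iff_le_add, le_sub_iff_add_le]
      constructor
      · intro h l; have := h l; constructor <;> linarith [(this : _ ∧ _).1, (this : _ ∧ _).2]
      · intro h l; have := h l; constructor <;> linarith [(this : _ ∧ _).1, (this : _ ∧ _).2]
    rw [this]
    exact MeasurableSet.iInter fun l => (hf _) measurableSet_Icc
  -- single-block hit lower bound
  have hitlb : ∀ m : ℕ, ENNReal.ofReal (q0 ^ L) ≤ Q {θ | ∀ l, |f (m, l) θ - t l| ≤ e} := by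
    intro m
    have hset : {θ | ∀ l, |f (m, l) θ - t l| ≤ e}
        = ⋂ p ∈ (Finset.univ.image fun l : Fin L => ((m, l) : ℕ × Fin L)),
            f p ⁻¹' Set.Icc (t p.2 - e) (t p.2 + e) := by
      ext θ
      simp only [Set.mem_iInter, Finset.mem_image, Finset.mem_univ, true_and, Set.mem_setOf_eq]
      constructor
      · rintro h p ⟨l, rfl⟩
        exact Set.mem_Icc.2 (abs_le.1 (h l) |>.imp (by intro h'; linarith) (by intro h'; linarith))
      · intro h l
        have := h (m, l) ⟨l, rfl⟩
        rw [Set.mem_preimage, Set.mem_Icc] at this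
        exact abs_le.2 ⟨by linarith [this.1], by linarith [this.2]⟩
    rw [hset]
    rw [hindep.measure_inter_preimage_eq_mul _
      (fun p _ => (measurableSet_Icc : MeasurableSet (Set.Icc (t p.2 - e) (t p.2 + e))))]
    have hinj : Function.Injective fun l : Fin L => ((m, l) : ℕ × Fin L) := by
      intro a b hab; simpa using congrArg Prod.snd hab
    rw [Finset.prod_image (fun a _ b _ h => hinj h)]
    have hfac : ∀ l ∈ (Finset.univ : Finset (Fin L)),
        ENNReal.ofReal q0 ≤ Q (f (m, l) ⁻¹' Set.Icc (t l - e) (t l + e)) := by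
      intro l _
      have hm : Q (f (m, l) ⁻¹' Set.Icc (t l - e) (t l + e))
          = (Measure.map (f (m, l)) Q) (Set.Icc (t l - e) (t l + e)) := by
        rw [Measure.map_apply (hf _) measurableSet_Icc]
      rw [hm, hgauss]
      exact aux_gauss_icc (t l) e Z he hZ (ht l)
    calc ENNReal.ofReal (q0 ^ L) = (ENNReal.ofReal q0) ^ L := ENNReal.ofReal_pow hq0 L
      _ = ∏ _l : Fin L, ENNReal.ofReal q0 := by simp
      _ ≤ ∏ l : Fin L, Q (f (m, l) ⁻¹' Set.Icc (t l - e) (t l + e)) :=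
          Finset.prod_le_prod' hfac
  -- induction
  induction M with
  | zero => simpa using prob_le_one
  | succ M ih =>
    -- event splits
    have hsplit : {θ | ∀ m, 1 ≤ m → m ≤ M + 1 → ¬ ∀ l, |f (m, l) θ - t l| ≤ e}
        = {θ | ∀ m, 1 ≤ m → m ≤ M → ¬ ∀ l, |f (m, l) θ - t l| ≤ e}
          ∩ {θ | ∀ l, |f (M + 1, l) θ - t l| ≤ e}ᶜ := by
      ext θ
      simp only [Set.mem_inter_iff, Set.mem_setOf_eq, Set.mem_compl_iff]
      constructor
      · intro h
        exact ⟨fun m h1 h2 => h m h1 (h2.trans (Nat.le_succ M)), h (M + 1) (by omega) le_rfl⟩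
      · rintro ⟨h1, h2⟩ m hm1 hm2
        rcases Nat.lt_or_ge m (M + 1) with hlt | hge
        · exact h1 m hm1 (by omega)
        · have : m = M + 1 := by omega
          subst this; exact h2
    rw [hsplit]
    -- independence: event on blocks 1..M vs block M+1
    set S : Finset (ℕ × Fin L) := (Finset.Icc 1 M) ×ˢ Finset.univ with hS
    set T : Finset (ℕ × Fin L) := {M + 1} ×ˢ Finset.univ with hT
    have hST : Disjoint S T := by
      rw [Finset.disjoint_left]
      rintro ⟨m, l⟩ hmS hmT
      simp [hS, hT, Finset.mem_product, Finset.mem_Icc] at hmS hmT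
      omega
    have hIF := hindep.indepFun_finset S T hST hf
    -- extend to full functions
    let φ₁ : (S → ℝ) → (ℕ → Fin L → ℝ) := fun v m l =>
      if h : ((m, l) : ℕ × Fin L) ∈ S then v ⟨(m, l), h⟩ else 0
    let φ₂ : (T → ℝ) → (Fin L → ℝ) := fun v l =>
      if h : (((M + 1 : ℕ), l) : ℕ × Fin L) ∈ T then v ⟨(M + 1, l), h⟩ else 0
    have hφ₁ : Measurable φ₁ := by
      refine measurable_pi_lambda _ fun m => measurable_pi_lambda _ fun l => ?_
      by_cases h : ((m, l) : ℕ × Fin L) ∈ S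
      · simp only [φ₁, dif_pos h]; exact measurable_pi_apply _
      · simp only [φ₁, dif_neg h]; exact measurable_const
    have hφ₂ : Measurable φ₂ := by
      refine measurable_pi_lambda _ fun l => ?_
      by_cases h : (((M + 1 : ℕ), l) : ℕ × Fin L) ∈ T
      · simp only [φ₂, dif_pos h]; exact measurable_pi_apply _
      · simp only [φ₂, dif_neg h]; exact measurable_const
    have hIF2 : IndepFun (fun θ => φ₁ fun i : S => f i θ) (fun θ => φ₂ fun i : T => f i θ) Q :=
      hIF.comp hφ₁ hφ₂
    -- express events as preimages
    set E₁ : Set (ℕ → Fin L → ℝ) := {w | ∀ m, 1 ≤ m → m ≤ M → ¬ ∀ l, |w m l - t l| ≤ e} with hE₁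
    set E₂ : Set (Fin L → ℝ) := {u | ∀ l, |u l - t l| ≤ e}ᶜ with hE₂
    have hE₁meas : MeasurableSet E₁ := by
      have : E₁ = ⋂ m, ⋂ (_ : 1 ≤ m), ⋂ (_ : m ≤ M),
          (⋂ l, {w : ℕ → Fin L → ℝ | |w m l - t l| ≤ e})ᶜ := by
        ext w; simp [hE₁]
      rw [this]
      refine MeasurableSet.iInter fun m => MeasurableSet.iInter fun _ =>
        MeasurableSet.iInter fun _ => (MeasurableSet.iInter fun l => ?_).compl
      have : Measurable fun w : ℕ → Fin L → ℝ => w m l :=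
        (measurable_pi_apply l).comp (measurable_pi_apply m)
      exact measurableSet_le (this.sub measurable_const).abs measurable_const
    have hE₂meas : MeasurableSet E₂ := by
      have h0 : E₂ = (⋂ l, {u : Fin L → ℝ | |u l - t l| ≤ e})ᶜ := by
        rw [hE₂]; congr 1; ext u; simp
      rw [h0]
      refine (MeasurableSet.iInter fun l => ?_).compl
      exact measurableSet_le ((measurable_pi_apply l).sub measurable_const).abs measurable_const
    have hpre₁ : {θ | ∀ m, 1 ≤ m → m ≤ M → ¬ ∀ l, |f (m, l) θ - t l| ≤ e}
        = (fun θ => φ₁ fun i : S => f i θ) ⁻¹' E₁ := by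
      ext θ
      simp only [Set.mem_preimage, hE₁, Set.mem_setOf_eq]
      refine forall_congr' fun m => ?_
      refine imp_congr_right fun h1 => imp_congr_right fun h2 => ?_
      have hmem : ∀ l : Fin L, ((m, l) : ℕ × Fin L) ∈ S := by
        intro l; simp [hS, Finset.mem_product, Finset.mem_Icc]; omega
      constructor
      · intro h hall; exact h fun l => by simpa [φ₁, dif_pos (hmem l)] using hall l
      · intro h hall; exact h fun l => by simpa [φ₁, dif_pos (hmem l)] using hall l
    have hpre₂ : ({θ | ∀ l, |f (M + 1, l) θ - t l| ≤ e}ᶜ : Set Θ)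
        = (fun θ => φ₂ fun i : T => f i θ) ⁻¹' E₂ := by
      ext θ
      have hmem : ∀ l : Fin L, (((M + 1 : ℕ), l) : ℕ × Fin L) ∈ T := by
        intro l; simp [hT, Finset.mem_product]
      simp only [Set.mem_preimage, hE₂, Set.mem_compl_iff, Set.mem_setOf_eq]
      constructor
      · intro h hall; exact h fun l => by simpa [φ₂, dif_pos (hmem l)] using hall l
      · intro h hall; exact h fun l => by simpa [φ₂, dif_pos (hmem l)] using hall l
    rw [hpre₁, hpre₂]
    rw [hIF2.measure_inter_preimage_eq_mul _ _ hE₁meas hE₂meas]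
    rw [← hpre₁, ← hpre₂]
    have hmiss : Q ({θ | ∀ l, |f (M + 1, l) θ - t l| ≤ e}ᶜ) ≤ ENNReal.ofReal (1 - q0 ^ L) := by
      rw [prob_compl_eq_one_sub (hitmeas (M + 1))]
      calc 1 - Q {θ | ∀ l, |f (M + 1, l) θ - t l| ≤ e}
          ≤ 1 - ENNReal.ofReal (q0 ^ L) := by
            exact tsub_le_tsub_left (hitlb (M + 1)) 1
        _ = ENNReal.ofReal (1 - q0 ^ L) := by
            rw [ENNReal.ofReal_sub _ hqL0, ENNReal.ofReal_one]
    calc Q _ * Q _ ≤ ENNReal.ofReal ((1 - q0 ^ L) ^ M) * ENNReal.ofReal (1 - q0 ^ L) :=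
          mul_le_mul' ih hmiss
      _ = ENNReal.ofReal ((1 - q0 ^ L) ^ (M + 1)) := by
          rw [← ENNReal.ofReal_mul (pow_nonneg (by linarith) M), ← pow_succ]

lemma aux_step2 {L : ℕ} {Ω : Type*} [MeasurableSpace Ω] (P : Measure Ω)
    [IsProbabilityMeasure P]
    (ψ : Fin L → ℝ) (ψh : Ω → Fin L → ℝ) (hψ : Measurable ψh)
    (σ : Fin L → ℝ) (hσ : ∀ l, 0 < σ l)
    (G : ℕ → Ω → Fin L → ℝ) (hGmeas : ∀ m l, Measurable fun ω => G m ω l)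
    (hGiid : iIndepFun (fun (p : ℕ × Fin L) ω => G p.1 ω p.2) P)
    (hGgauss : ∀ p : ℕ × Fin L, Measure.map (fun ω => G p.1 ω p.2) P = gaussianReal 0 1)
    (hGindep : IndepFun (fun ω (p : ℕ × Fin L) => G p.1 ω p.2) ψh P)
    (Z e : ℝ) (hZ : 0 ≤ Z) (he : 0 ≤ e) (M : ℕ) :
    P {ω | ∀ l, |ψh ω l - ψ l| / σ l ≤ Z}
      ≤ P {ω | ∃ m, 1 ≤ m ∧ m ≤ M ∧ ∀ l, |ψh ω l + σ l * G m ω l - ψ l| / σ l ≤ e}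
        + ENNReal.ofReal ((1 - (2 * e * gaussianPDFReal 0 1 (Z + e)) ^ L) ^ M) := by
  classical
  set Noise : Ω → (ℕ × Fin L → ℝ) := fun ω p => G p.1 ω p.2 with hNoisedef
  have hNoise : Measurable Noise := measurable_pi_lambda _ fun p => hGmeas p.1 p.2
  set μX := P.map ψh with hμX
  set μY := P.map Noise with hμY
  haveI : IsProbabilityMeasure μX := Measure.isProbabilityMeasure_map hψ.aemeasurable
  haveI : IsProbabilityMeasure μY := Measure.isProbabilityMeasure_map hNoise.aemeasurable
  have hpair : P.map (fun ω => (ψh ω, Noise ω)) = μX.prod μY :=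
    (indepFun_iff_map_prod_eq_prod_map_map hψ.aemeasurable hNoise.aemeasurable).mp hGindep.symm
  set A := {ω | ∀ l, |ψh ω l - ψ l| / σ l ≤ Z} with hA
  set E := {ω | ∃ m, 1 ≤ m ∧ m ≤ M ∧ ∀ l, |ψh ω l + σ l * G m ω l - ψ l| / σ l ≤ e} with hE
  set S : Set ((Fin L → ℝ) × (ℕ × Fin L → ℝ)) :=
    {z | (∀ l, |z.1 l - ψ l| / σ l ≤ Z) ∧
      ∀ m, 1 ≤ m → m ≤ M → ¬ ∀ l, |z.1 l + σ l * z.2 (m, l) - ψ l| / σ l ≤ e} with hSdef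
  have hz1 : ∀ l : Fin L, Measurable fun z : (Fin L → ℝ) × (ℕ × Fin L → ℝ) => z.1 l :=
    fun l => (measurable_pi_apply l).comp measurable_fst
  have hz2 : ∀ p : ℕ × Fin L, Measurable fun z : (Fin L → ℝ) × (ℕ × Fin L → ℝ) => z.2 p :=
    fun p => (measurable_pi_apply p).comp measurable_snd
  have hSmeas : MeasurableSet S := by
    have h1 : MeasurableSet {z : (Fin L → ℝ) × (ℕ × Fin L → ℝ) |
        ∀ l, |z.1 l - ψ l| / σ l ≤ Z} := by
      have : {z : (Fin L → ℝ) × (ℕ × Fin L → ℝ) | ∀ l, |z.1 l - ψ l| / σ l ≤ Z}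
          = ⋂ l, {z : (Fin L → ℝ) × (ℕ × Fin L → ℝ) | |z.1 l - ψ l| / σ l ≤ Z} := by
        ext z; simp
      rw [this]
      exact MeasurableSet.iInter fun l =>
        measurableSet_le ((((hz1 l).sub measurable_const).abs).div measurable_const)
          measurable_const
    have h2 : MeasurableSet {z : (Fin L → ℝ) × (ℕ × Fin L → ℝ) |
        ∀ m, 1 ≤ m → m ≤ M → ¬ ∀ l, |z.1 l + σ l * z.2 (m, l) - ψ l| / σ l ≤ e} := by
      have : {z : (Fin L → ℝ) × (ℕ × Fin L → ℝ) |
          ∀ m, 1 ≤ m → m ≤ M → ¬ ∀ l, |z.1 l + σ l * z.2 (m, l) - ψ l| / σ l ≤ e}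
          = ⋂ m, ⋂ (_ : 1 ≤ m), ⋂ (_ : m ≤ M),
            (⋂ l, {z : (Fin L → ℝ) × (ℕ × Fin L → ℝ) |
              |z.1 l + σ l * z.2 (m, l) - ψ l| / σ l ≤ e})ᶜ := by
        ext z; simp
      rw [this]
      refine MeasurableSet.iInter fun m => MeasurableSet.iInter fun _ =>
        MeasurableSet.iInter fun _ => (MeasurableSet.iInter fun l => ?_).compl
      exact measurableSet_le ((((hz1 l).add (measurable_const.mul (hz2 (m, l)))).sub
        measurable_const).abs.div measurable_const) measurable_const
    exact h1.inter h2
  -- A ∩ Eᶜ as preimage of S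
  have hAE : A ∩ Eᶜ = (fun ω => (ψh ω, Noise ω)) ⁻¹' S := by
    ext ω
    simp only [hA, hE, hSdef, Set.mem_inter_iff, Set.mem_compl_iff, Set.mem_setOf_eq,
      Set.mem_preimage, Noise]
    constructor
    · rintro ⟨h1, h2⟩
      refine ⟨h1, fun m hm1 hm2 hall => h2 ⟨m, hm1, hm2, hall⟩⟩
    · rintro ⟨h1, h2⟩
      exact ⟨h1, fun ⟨m, hm1, hm2, hall⟩ => h2 m hm1 hm2 hall⟩
  have hpairmeas : Measurable fun ω => (ψh ω, Noise ω) := hψ.prodMk hNoise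
  have hPAE : P (A ∩ Eᶜ) = (μX.prod μY) S := by
    rw [hAE, ← Measure.map_apply hpairmeas hSmeas, hpair]
  -- coordinates of μY are iid gaussian
  have hYindep : iIndepFun
      (fun (p : ℕ × Fin L) (y : ℕ × Fin L → ℝ) => y p) μY := by
    rw [iIndepFun_iff_measure_inter_preimage_eq_mul]
    intro Sf sets hsets
    have hmeasInter : MeasurableSet (⋂ p ∈ Sf, (fun y : ℕ × Fin L → ℝ => y p) ⁻¹' sets p) :=
      Set.Finite.measurableSet_biInter Sf.finite_toSet fun p hp =>
        measurable_pi_apply p (hsets p hp)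
    rw [hμY, Measure.map_apply hNoise hmeasInter]
    have hpre : Noise ⁻¹' (⋂ p ∈ Sf, (fun y : ℕ × Fin L → ℝ => y p) ⁻¹' sets p)
        = ⋂ p ∈ Sf, (fun ω => G p.1 ω p.2) ⁻¹' sets p := by
      ext ω; simp [Noise]
    rw [hpre, hGiid.measure_inter_preimage_eq_mul Sf hsets]
    refine Finset.prod_congr rfl fun p hp => ?_
    rw [Measure.map_apply hNoise (measurable_pi_apply p (hsets p hp))]
    rfl
  have hYgauss : ∀ p : ℕ × Fin L, μY.map (fun y : ℕ × Fin L → ℝ => y p) = gaussianReal 0 1 := by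
    intro p
    rw [hμY, Measure.map_map (measurable_pi_apply p) hNoise]
    exact hGgauss p
  -- section bound
  set q : ENNReal := ENNReal.ofReal ((1 - (2 * e * gaussianPDFReal 0 1 (Z + e)) ^ L) ^ M) with hq
  have hsec : ∀ x : Fin L → ℝ, μY (Prod.mk x ⁻¹' S) ≤ q := by
    intro x
    by_cases hx : ∀ l, |x l - ψ l| / σ l ≤ Z
    · have hsect : Prod.mk x ⁻¹' S
          = {y : ℕ × Fin L → ℝ | ∀ m, 1 ≤ m → m ≤ M →
              ¬ ∀ l, |y (m, l) - (ψ l - x l) / σ l| ≤ e} := by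
        ext y
        simp only [hSdef, Set.mem_preimage, Set.mem_setOf_eq]
        have hiff : ∀ (m : ℕ) (l : Fin L),
            |x l + σ l * y (m, l) - ψ l| / σ l ≤ e ↔ |y (m, l) - (ψ l - x l) / σ l| ≤ e := by
          intro m l
          have hσl := hσ l
          rw [show x l + σ l * y (m, l) - ψ l = σ l * (y (m, l) - (ψ l - x l) / σ l) by
            field_simp; ring]
          rw [abs_mul, abs_of_pos hσl, mul_comm, mul_div_assoc, div_self hσl.ne', mul_one]
        constructor
        · rintro ⟨_, h2⟩ m hm1 hm2 hall
          exact h2 m hm1 hm2 fun l => (hiff m l).mpr (hall l)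
        · intro h
          exact ⟨hx, fun m hm1 hm2 hall => h m hm1 hm2 fun l => (hiff m l).mp (hall l)⟩
      rw [hsect]
      refine aux_key μY (fun p y => y p) (fun p => measurable_pi_apply p) hYindep hYgauss
        (fun l => (ψ l - x l) / σ l) Z e hZ he (fun l => ?_) M
      have hσl := hσ l
      rw [abs_div, abs_of_pos hσl]
      calc |ψ l - x l| / σ l = |x l - ψ l| / σ l := by rw [abs_sub_comm]
        _ ≤ Z := hx l
    · have : Prod.mk x ⁻¹' S = ∅ := by
        ext y; simp only [hSdef, Set.mem_preimage, Set.mem_setOf_eq, Set.mem_empty_iff_false,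
          iff_false]
        rintro ⟨h1, _⟩; exact hx h1
      rw [this]; simp
  have hprodS : (μX.prod μY) S ≤ q := by
    rw [Measure.prod_apply hSmeas]
    calc ∫⁻ x, μY (Prod.mk x ⁻¹' S) ∂μX ≤ ∫⁻ _, q ∂μX := lintegral_mono fun x => hsec x
      _ = q := by simp
  calc P A ≤ P (E ∪ (A ∩ Eᶜ)) := measure_mono (by
        intro ω hω
        by_cases hωE : ω ∈ E
        · exact Or.inl hωE
        · exact Or.inr ⟨hω, hωE⟩)
    _ ≤ P E + P (A ∩ Eᶜ) := measure_union_le _ _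
    _ ≤ P E + q := by rw [hPAE]; exact add_le_add_right hprodS _

lemma aux_liminf_lb {u : ℕ → ℝ} {C b : ℝ} (hub : ∀ k, u k ≤ C)
    (hev : ∀ᶠ k in atTop, b ≤ u k) : b ≤ liminf u atTop :=
  le_liminf_of_le (isCoboundedUnder_ge_of_eventually_le _ (Eventually.of_forall hub)) hev

lemma aux_liminf_ub {u : ℕ → ℝ} {C c : ℝ} (hlb : ∀ k, c ≤ u k) (hub : ∀ k, u k ≤ C) :
    liminf u atTop ≤ C := by
  refine liminf_le_of_le (isBoundedUnder_of ⟨c, fun k => hlb k⟩) fun b hb => ?_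
  obtain ⟨n, hn⟩ := hb.exists
  exact hn.trans (hub n)

lemma aux_gpdf_cont : Continuous (gaussianPDFReal 0 1) := by
  unfold gaussianPDFReal
  fun_prop

lemma aux_gpdf_pow (L : ℕ) (Z : ℝ) :
    gaussianPDFReal 0 1 Z ^ L = (2 * Real.pi) ^ (-(L : ℝ) / 2) * Real.exp (-((L : ℝ) / 2) * Z ^ 2) := by
  unfold gaussianPDFReal
  have h2π : (0:ℝ) ≤ 2 * π := by positivity
  rw [mul_pow]
  congr 1
  · calc (√(2 * π * ((1:NNReal):ℝ)))⁻¹ ^ L = ((2 * π) ^ ((1:ℝ)/2))⁻¹ ^ L := by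
          norm_num [Real.sqrt_eq_rpow]
      _ = ((2 * π) ^ (-((1:ℝ)/2))) ^ L := by rw [← Real.rpow_neg h2π]
      _ = (2 * π) ^ (-((1:ℝ)/2) * L) := by
          rw [← Real.rpow_natCast ((2*π) ^ (-((1:ℝ)/2))) L, ← Real.rpow_mul h2π]
      _ = (2 * π) ^ (-(L:ℝ) / 2) := by ring_nf
  · rw [← Real.exp_nat_mul]
    congr 1
    push_cast
    ring


/-- **Theorem 1 of the paper.** Resampling guarantee: if the standardized
statistics `(ψ̂_{n,l} − ψ_l)/σ_{n,l}` satisfy an asymptotic Gaussian tail bound, and the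
resampled statistics are `ψ̂_n^{[m]} = ψ̂_n + σ_n ⊙ G_{n,m}` with i.i.d. standard Gaussian
noise independent of the data, then
`liminf_n liminf_M P(min_{1≤m≤M} max_l |ψ̂_{n,l}^{[m]} − ψ_l|/σ_{n,l} ≤ err_n(M,ν)) ≥ 1 − ν`,
where `err_n(M,ν) = (1/2)(2 log n /(c(ν) M))^{1/L}` and
`c(ν) = (2π)^{−L/2} exp(−(L/2) z_ν²)` with `Φ(z_ν) = 1 − ν/(2L)`. -/
theorem resampling_min_max_coverage
    (L : ℕ) (hL : 1 ≤ L) (ψ : Fin L → ℝ)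
    {Ω : ℕ → Type*} [∀ n, MeasurableSpace (Ω n)]
    (P : ∀ n, Measure (Ω n)) [∀ n, IsProbabilityMeasure (P n)]
    (ψhat : ∀ n, Ω n → Fin L → ℝ)
    (hψhatMeas : ∀ n, Measurable (ψhat n))
    (σ : ℕ → Fin L → ℝ) (hσ : ∀ n l, 0 < σ n l)
    (G : ∀ n, ℕ → Ω n → Fin L → ℝ)
    (hGmeas : ∀ n m l, Measurable (fun ω => G n m ω l))
    (hGiid : ∀ n, ProbabilityTheory.iIndepFun
      (fun (p : ℕ × Fin L) (ω : Ω n) => G n p.1 ω p.2) (P n))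
    (hGgauss : ∀ n (p : ℕ × Fin L),
      Measure.map (fun ω => G n p.1 ω p.2) (P n) = ProbabilityTheory.gaussianReal 0 1)
    (hGindepData : ∀ n, ProbabilityTheory.IndepFun
      (fun (ω : Ω n) (p : ℕ × Fin L) => G n p.1 ω p.2) (ψhat n) (P n))
    (htail : ∀ (l : Fin L) (z : ℝ), 0 < z →
      Filter.limsup (fun n => (P n {ω | z ≤ |ψhat n ω l - ψ l| / σ n l}).toReal)
        Filter.atTop ≤ 2 * (1 - stdGaussianCDF z))
    (ν : ℝ) (hν0 : 0 < ν) (hν : ν ≤ 1 / 2)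
    (zν : ℝ) (hzν0 : 0 < zν) (hzν : stdGaussianCDF zν = 1 - ν / (2 * L))
    (c : ℝ) (hc : c = (2 * Real.pi) ^ (-(L : ℝ) / 2) * Real.exp (-((L : ℝ) / 2) * zν ^ 2))
    (err : ℕ → ℕ → ℝ)
    (herr : ∀ n M, err n M = (1 / 2) * (2 * Real.log n / (c * M)) ^ (1 / (L : ℝ))) :
    1 - ν ≤
      Filter.liminf (fun n : ℕ =>
        Filter.liminf (fun M : ℕ =>
          (P n {ω | ∃ m, 1 ≤ m ∧ m ≤ M ∧
            ∀ l, |ψhat n ω l + σ n l * G n m ω l - ψ l| / σ n l ≤ err n M}).toReal)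
          Filter.atTop) Filter.atTop := by
  classical
  have hLR : (0:ℝ) < L := by exact_mod_cast hL
  have hL0 : (L:ℝ) ≠ 0 := ne_of_gt hLR
  have hcpos : 0 < c := by
    rw [hc]
    exact mul_pos (Real.rpow_pos_of_pos (by positivity) _) (Real.exp_pos _)
  have hZ0 : (0:ℝ) ≤ zν := hzν0.le
  have hlog : ∀ n : ℕ, 0 ≤ Real.log n := by
    intro n
    rcases Nat.eq_zero_or_pos n with h | h
    · simp [h]
    · exact Real.log_natCast_nonneg n
  have herr0 : ∀ n M, 0 ≤ err n M := by
    intro n M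
    rw [herr]
    have hb : 0 ≤ 2 * Real.log n / (c * M) := by positivity
    exact mul_nonneg (by norm_num) (Real.rpow_nonneg hb _)
  set pb : ℕ → ℕ → ℝ := fun n M => 2 * err n M * gaussianPDFReal 0 1 (zν + err n M) with hpb
  have hpb0 : ∀ n M, 0 ≤ pb n M := by
    intro n M
    have h1 := gaussianPDFReal_nonneg 0 1 (zν + err n M)
    have h2 := herr0 n M
    positivity
  have hpb1 : ∀ n M, pb n M ≤ 1 := fun n M => aux_base_le_one _ _ (herr0 n M) hZ0
  set pM : ℕ → ℕ → ℝ := fun n M => pb n M ^ L with hpM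
  have hpM0 : ∀ n M, 0 ≤ pM n M := fun n M => pow_nonneg (hpb0 n M) L
  have hpM1 : ∀ n M, pM n M ≤ 1 := fun n M => pow_le_one₀ (hpb0 n M) (hpb1 n M)
  set A : ∀ n : ℕ, Set (Ω n) := fun n => {ω | ∀ l, |ψhat n ω l - ψ l| / σ n l ≤ zν} with hA
  set fR : ℕ → ℕ → ℝ := fun n M => (P n {ω | ∃ m, 1 ≤ m ∧ m ≤ M ∧
    ∀ l, |ψhat n ω l + σ n l * G n m ω l - ψ l| / σ n l ≤ err n M}).toReal with hfR
  set aR : ℕ → ℝ := fun n => (P n (A n)).toReal with haR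
  have hprob1 : ∀ (n : ℕ) (s : Set (Ω n)), (P n s).toReal ≤ 1 := by
    intro n s
    rw [show (1:ℝ) = (P n Set.univ).toReal by simp]
    exact ENNReal.toReal_mono (measure_ne_top _ _) (measure_mono (Set.subset_univ s))
  have hstep2 : ∀ n M, aR n ≤ fR n M + (1 - pM n M) ^ M := by
    intro n M
    have h := aux_step2 (P n) ψ (ψhat n) (hψhatMeas n) (σ n) (hσ n) (G n)
      (fun m l => hGmeas n m l) (hGiid n) (hGgauss n) (hGindepData n) zν (err n M)
      hZ0 (herr0 n M) M
    have hq0 : 0 ≤ (1 - pM n M) ^ M := pow_nonneg (by linarith [hpM1 n M]) M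
    calc aR n ≤ ((P n {ω | ∃ m, 1 ≤ m ∧ m ≤ M ∧
            ∀ l, |ψhat n ω l + σ n l * G n m ω l - ψ l| / σ n l ≤ err n M})
          + ENNReal.ofReal ((1 - pM n M) ^ M)).toReal :=
        ENNReal.toReal_mono
          (ENNReal.add_ne_top.mpr ⟨measure_ne_top _ _, ENNReal.ofReal_ne_top⟩) h
      _ = fR n M + (1 - pM n M) ^ M := by
        rw [ENNReal.toReal_add (measure_ne_top _ _) ENNReal.ofReal_ne_top,
          ENNReal.toReal_ofReal hq0]
  have hinner : ∀ n : ℕ,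
      aR n - Real.exp (-(2 * Real.log n)) ≤ Filter.liminf (fun M => fR n M) Filter.atTop := by
    intro n
    have h2e : ∀ M : ℕ, (2 * err n M) ^ L = 2 * Real.log n / (c * M) := by
      intro M
      have hb : 0 ≤ 2 * Real.log n / (c * M) := by positivity
      rw [herr]
      have h1 : 2 * (1 / 2 * (2 * Real.log n / (c * M)) ^ (1 / (L:ℝ)))
          = (2 * Real.log n / (c * M)) ^ (1 / (L:ℝ)) := by ring
      rw [h1, ← Real.rpow_natCast ((2 * Real.log n / (c * M)) ^ (1 / (L:ℝ))) L,
        ← Real.rpow_mul hb, one_div, inv_mul_cancel₀ hL0, Real.rpow_one]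
    have herrt : Filter.Tendsto (fun M : ℕ => err n M) Filter.atTop (nhds 0) := by
      have hb : Filter.Tendsto (fun M : ℕ => 2 * Real.log n / (c * M)) Filter.atTop (nhds 0) := by
        have heq : (fun M : ℕ => 2 * Real.log n / (c * M))
            = fun M : ℕ => (2 * Real.log n / c) / M := by
          funext M; rw [div_div]
        rw [heq]
        exact tendsto_const_div_atTop_nhds_zero_nat _
      have hcont : ContinuousAt (fun x : ℝ => (1/2 : ℝ) * x ^ (1 / (L:ℝ))) 0 :=
        continuousAt_const.mul (Real.continuousAt_rpow_const 0 _ (Or.inr (by positivity)))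
      have h3 := hcont.tendsto.comp hb
      have h4 : (1/2 : ℝ) * (0:ℝ) ^ (1 / (L:ℝ)) = 0 := by
        rw [Real.zero_rpow (by positivity : (1 / (L:ℝ)) ≠ 0)]; ring
      rw [h4] at h3
      refine h3.congr fun M => ?_
      simp only [Function.comp]
      rw [herr]
    have hgc : Filter.Tendsto (fun M : ℕ => gaussianPDFReal 0 1 (zν + err n M) ^ L)
        Filter.atTop (nhds c) := by
      have h1 : Filter.Tendsto (fun M : ℕ => zν + err n M) Filter.atTop (nhds zν) := by
        have := tendsto_const_nhds (x := zν) (f := Filter.atTop (α := ℕ)) |>.add herrt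
        simpa using this
      have h2 := ((aux_gpdf_cont.tendsto zν).comp h1).pow L
      have h3 : gaussianPDFReal 0 1 zν ^ L = c := by rw [aux_gpdf_pow, hc]
      rwa [h3] at h2
    have hpMM : Filter.Tendsto (fun M : ℕ => pM n M * M) Filter.atTop
        (nhds (2 * Real.log n)) := by
      have h4 : Filter.Tendsto
          (fun M : ℕ => (2 * Real.log n / c) * gaussianPDFReal 0 1 (zν + err n M) ^ L)
          Filter.atTop (nhds ((2 * Real.log n / c) * c)) := tendsto_const_nhds.mul hgc
      have h5 : (2 * Real.log n / c) * c = 2 * Real.log n := div_mul_cancel₀ _ hcpos.ne'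
      rw [h5] at h4
      refine Filter.Tendsto.congr' ?_ h4
      filter_upwards [Filter.eventually_ge_atTop 1] with M hM
      have hM0 : (M:ℝ) ≠ 0 := Nat.cast_ne_zero.2 (by omega)
      have h6 : pM n M = (2 * err n M) ^ L * gaussianPDFReal 0 1 (zν + err n M) ^ L := by
        rw [hpM, hpb]; simp only []; rw [← mul_pow]
      rw [h6, h2e M]
      field_simp
    have hexp : Filter.Tendsto (fun M : ℕ => Real.exp (-(pM n M * M))) Filter.atTop
        (nhds (Real.exp (-(2 * Real.log n)))) :=
      (Real.continuous_exp.tendsto _).comp hpMM.neg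
    have hbd : ∀ M : ℕ, (1 - pM n M) ^ M ≤ Real.exp (-(pM n M * M)) := by
      intro M
      have h1 : 1 - pM n M ≤ Real.exp (-(pM n M)) := by
        have := Real.add_one_le_exp (-(pM n M)); linarith
      calc (1 - pM n M) ^ M ≤ (Real.exp (-(pM n M))) ^ M :=
            pow_le_pow_left₀ (by linarith [hpM1 n M]) h1 M
        _ = Real.exp (-(pM n M * M)) := by rw [← Real.exp_nat_mul]; congr 1; ring
    refine le_of_forall_pos_le_add fun δ hδ => ?_
    have hev : ∀ᶠ M in Filter.atTop, aR n - Real.exp (-(2 * Real.log n)) - δ ≤ fR n M := by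
      have h5 : ∀ᶠ M in Filter.atTop,
          Real.exp (-(pM n M * M)) < Real.exp (-(2 * Real.log n)) + δ :=
        hexp.eventually_lt_const (by linarith)
      filter_upwards [h5] with M hM
      have h6 := hstep2 n M
      have h7 := hbd M
      linarith
    have h8 := aux_liminf_lb (fun M => hprob1 n _) hev
    linarith
  have hAmeas : ∀ n, MeasurableSet (A n) := by
    intro n
    have h : A n = ⋂ l, {ω | |ψhat n ω l - ψ l| / σ n l ≤ zν} := by ext ω; simp [hA]
    rw [h]
    exact MeasurableSet.iInter fun l => measurableSet_le
      (((((measurable_pi_apply l).comp (hψhatMeas n)).sub measurable_const).abs).div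
        measurable_const) measurable_const
  have hstepF : ∀ ε : ℝ, 0 < ε → ∀ᶠ n in Filter.atTop, 1 - ν - ε ≤ aR n := by
    intro ε hε
    set g : Fin L → ℕ → ℝ := fun l n => (P n {ω | zν ≤ |ψhat n ω l - ψ l| / σ n l}).toReal with hg
    have hglimsup : ∀ l, Filter.limsup (g l) Filter.atTop ≤ ν / L := by
      intro l
      have h := htail l zν hzν0
      have h2 : 2 * (1 - stdGaussianCDF zν) = ν / L := by rw [hzν]; field_simp; ring
      rwa [h2] at h
    have hgev : ∀ᶠ n in Filter.atTop, ∀ l, g l n < ν / L + ε / L := by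
      rw [Filter.eventually_all]
      intro l
      refine Filter.eventually_lt_of_limsup_lt
        (lt_of_le_of_lt (hglimsup l) (lt_add_of_pos_right _ (by positivity))) ?_
      exact Filter.isBoundedUnder_of ⟨1, fun n => hprob1 n _⟩
    filter_upwards [hgev] with n hn
    have hsub : (A n)ᶜ ⊆ ⋃ l, {ω | zν ≤ |ψhat n ω l - ψ l| / σ n l} := by
      intro ω hω
      simp only [hA, Set.mem_compl_iff, Set.mem_setOf_eq, not_forall, not_le] at hω
      obtain ⟨l, hl⟩ := hω
      exact Set.mem_iUnion.2 ⟨l, le_of_lt hl⟩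
    have h1 : P n ((A n)ᶜ) ≤ ∑ l : Fin L, P n {ω | zν ≤ |ψhat n ω l - ψ l| / σ n l} :=
      (measure_mono hsub).trans (measure_iUnion_fintype_le _ _)
    have hsumne : (∑ l : Fin L, P n {ω | zν ≤ |ψhat n ω l - ψ l| / σ n l}) ≠ ⊤ :=
      (ENNReal.sum_lt_top.mpr fun l _ => measure_lt_top _ _).ne
    have h2 : (P n ((A n)ᶜ)).toReal ≤ ∑ l : Fin L, g l n := by
      calc (P n ((A n)ᶜ)).toReal
          ≤ (∑ l : Fin L, P n {ω | zν ≤ |ψhat n ω l - ψ l| / σ n l}).toReal :=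
            ENNReal.toReal_mono hsumne h1
        _ = ∑ l : Fin L, g l n := ENNReal.toReal_sum fun l _ => measure_ne_top _ _
    have h3 : ∑ l : Fin L, g l n ≤ ∑ _l : Fin L, (ν / L + ε / L) :=
      Finset.sum_le_sum fun l _ => (hn l).le
    have h4 : ∑ _l : Fin L, (ν / L + ε / L) = ν + ε := by
      rw [Finset.sum_const, Finset.card_univ, Fintype.card_fin, nsmul_eq_mul]
      field_simp
    have h5 : aR n + (P n ((A n)ᶜ)).toReal = 1 := by
      rw [haR, ← ENNReal.toReal_add (measure_ne_top _ _) (measure_ne_top _ _),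
        measure_add_measure_compl (hAmeas n)]
      simp
    linarith
  have hrt : Filter.Tendsto (fun n : ℕ => Real.exp (-(2 * Real.log n))) Filter.atTop (nhds 0) := by
    have h1 : Filter.Tendsto (fun n : ℕ => Real.log n) Filter.atTop Filter.atTop :=
      Real.tendsto_log_atTop.comp tendsto_natCast_atTop_atTop
    have h2 : Filter.Tendsto (fun n : ℕ => 2 * Real.log n) Filter.atTop Filter.atTop :=
      h1.const_mul_atTop two_pos
    have h3 : Filter.Tendsto (fun n : ℕ => -(2 * Real.log n)) Filter.atTop Filter.atBot :=
      tendsto_neg_atTop_atBot.comp h2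
    exact Real.tendsto_exp_atBot.comp h3
  refine le_of_forall_pos_le_add fun ε hε => ?_
  have hev : ∀ᶠ n in Filter.atTop,
      1 - ν - ε ≤ Filter.liminf (fun M => fR n M) Filter.atTop := by
    filter_upwards [hstepF (ε/2) (by linarith),
      hrt.eventually_le_const (show (0:ℝ) < ε/2 by linarith)] with n h1 h2
    have h3 := hinner n
    linarith
  have hub : ∀ n : ℕ, Filter.liminf (fun M => fR n M) Filter.atTop ≤ 1 :=
    fun n => aux_liminf_ub (fun M => ENNReal.toReal_nonneg) (fun M => hprob1 n _)
  have hlim := aux_liminf_lb hub hev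
  linarith
end

section
/- Let L ≥ 1 be a natural number and Z ∈ ℝ^L a fixed vector (of population Fisher-transformed partial correlations). For each n ∈ ℕ let (Ω_n, P_n) be a probability space carrying a random vector Ẑ_n : Ω_n → ℝ^L and a family (G_{n,m})_{m∈ℕ} of ℝ^L-valued random vectors whose coordinates are i.i.d. standard Gaussian N(0,1) and such that (G_{n,m})_m is independent of Ẑ_n; define the resampled statistics Ẑ_n^{[m]} := Ẑ_n + G_{n,m}. Assume that for every coordinate l and every z > 0, limsup_{n→∞} P_n( |Ẑ_{n,l} − Z_l| ≥ z ) ≤ 2(1 − Φ(z)). Fix ν with 0 < ν ≤ 1/2, let z_ν > 0 satisfy Φ(z_ν) = 1 − ν/(2L), and set c(ν) := (2π)^{−L/2} exp(−(L/2) z_ν²) and err_n(M, ν) := (1/2) (2 log n / (c(ν) M))^{1/L}. Then liminf_{n→∞} liminf_{M→∞} P_n( min_{1≤m≤M} max_{1≤l≤L} |Ẑ_{n,l}^{[m]} − Z_l| ≤ err_n(M, ν) ) ≥ 1 − ν. -/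
open MeasureTheory ProbabilityTheory Real Filter

section AuxLemmas
open Set

lemma gaussianPDFReal_le_one (x : ℝ) : gaussianPDFReal 0 1 x ≤ 1 := by
  have hpi : (3:ℝ) < π := Real.pi_gt_three
  have h0 : (1:ℝ) ≤ 2 * π * 1 := by nlinarith
  have h1 : (1:ℝ) ≤ √(2 * π * 1) := by
    rw [show (1:ℝ) = √1 by simp]
    exact Real.sqrt_le_sqrt (by simpa using h0)
  simp only [gaussianPDFReal, NNReal.coe_one, sub_zero]
  have h2 : rexp (- x^2 / (2 * 1)) ≤ 1 := by
    rw [Real.exp_le_one_iff]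
    nlinarith [sq_nonneg x]
  calc (√(2 * π * 1))⁻¹ * rexp (- x^2 / (2 * 1)) ≤ 1 * 1 := by
        apply mul_le_mul _ h2 (Real.exp_nonneg _) zero_le_one
        rw [inv_le_one_iff₀]; right; simpa using h1
    _ = 1 := by ring

lemma stdGaussianCDF_lip {x y : ℝ} (h : y ≤ x) :
    stdGaussianCDF x - stdGaussianCDF y ≤ x - y := by
  have hsub : Iic x ⊆ Iic y ∪ Ioc y x := by
    intro a ha; rcases le_or_gt a y with h'|h'
    · exact Or.inl h'
    · exact Or.inr ⟨h', ha⟩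
  have hIic : (gaussianReal 0 1) (Iic x) ≤ (gaussianReal 0 1) (Iic y) + (gaussianReal 0 1) (Ioc y x) :=
    le_trans (measure_mono hsub) (measure_union_le _ _)
  have hbound : (gaussianReal 0 1) (Ioc y x) ≤ ENNReal.ofReal (x - y) := by
    rw [gaussianReal_apply 0 one_ne_zero]
    calc ∫⁻ t in Ioc y x, gaussianPDF 0 1 t
        ≤ ∫⁻ _ in Ioc y x, 1 := by
          refine lintegral_mono fun t => ?_
          rw [gaussianPDF]
          exact ENNReal.ofReal_le_of_le_toReal (by simpa using gaussianPDFReal_le_one t)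
      _ = ENNReal.ofReal (x - y) := by
          rw [lintegral_one, Measure.restrict_apply_univ, Real.volume_Ioc]
  rw [stdGaussianCDF, stdGaussianCDF, cdf_eq_real, cdf_eq_real, measureReal_def, measureReal_def]
  have h2 : ((gaussianReal 0 1) (Iic x)).toReal ≤
      ((gaussianReal 0 1) (Iic y)).toReal + (x - y) := by
    have := ENNReal.toReal_mono (by finiteness) (le_trans hIic (add_le_add_right hbound _))
    rwa [ENNReal.toReal_add (measure_ne_top _ _) (by finiteness),
      ENNReal.toReal_ofReal (by linarith)] at this
  linarith

lemma gaussian_Icc_lower {zν r a : ℝ} (hr : 0 ≤ r) (h : |a| + r ≤ zν) :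
    ENNReal.ofReal ((2*r) * ((√(2*π))⁻¹ * rexp (-zν^2/2))) ≤
      gaussianReal 0 1 (Icc (a-r) (a+r)) := by
  rw [gaussianReal_apply 0 one_ne_zero]
  have hpt : ∀ t ∈ Icc (a-r) (a+r),
      ENNReal.ofReal ((√(2*π))⁻¹ * rexp (-zν^2/2)) ≤ gaussianPDF 0 1 t := by
    intro t ht
    rw [gaussianPDF]
    apply ENNReal.ofReal_le_ofReal
    simp only [gaussianPDFReal, NNReal.coe_one, sub_zero, mul_one]
    have habs : |t| ≤ zν := by
      rw [abs_le]; rcases ht with ⟨h1, h2⟩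
      constructor <;> [skip; skip] <;> cases abs_le.mp (le_refl |a|) <;> nlinarith [neg_abs_le a, le_abs_self a]
    have ht2 : t^2 ≤ zν^2 := by nlinarith [abs_nonneg t, sq_abs t, sq_abs zν]
    have := Real.exp_le_exp.mpr (show -zν^2/2 ≤ -t^2/2 by nlinarith)
    gcongr
  calc ENNReal.ofReal ((2*r) * ((√(2*π))⁻¹ * rexp (-zν^2/2)))
      = ENNReal.ofReal ((√(2*π))⁻¹ * rexp (-zν^2/2)) * volume (Icc (a-r) (a+r)) := by
        rw [Real.volume_Icc, show a + r - (a - r) = 2*r by ring,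
          ← ENNReal.ofReal_mul (by positivity)]
        ring_nf
    _ = ∫⁻ _ in Icc (a-r) (a+r), ENNReal.ofReal ((√(2*π))⁻¹ * rexp (-zν^2/2)) := by
        rw [setLIntegral_const]
    _ ≤ ∫⁻ t in Icc (a-r) (a+r), gaussianPDF 0 1 t :=
        setLIntegral_mono (measurable_gaussianPDF 0 1) hpt

lemma prod_of_blocks {L : ℕ} (μ : Measure (ℕ × Fin L → ℝ)) [IsProbabilityMeasure μ]
    (hindep : iIndepFun
      (fun p (g : ℕ × Fin L → ℝ) => g p) μ)
    (C : ℕ → Set (ℕ × Fin L → ℝ)) (I : ℕ → Fin L → Set ℝ)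
    (hI : ∀ m l, MeasurableSet (I m l))
    (hC : ∀ m, C m = (⋂ l, (fun g : ℕ × Fin L → ℝ => g (m, l)) ⁻¹' I m l)ᶜ)
    (T : Finset ℕ) :
    μ (⋂ m ∈ T, C m) = ∏ m ∈ T, μ (C m) := by
  classical
  induction T using Finset.induction with
  | empty => simp
  | @insert a T ha ih =>
    set S₁ : Finset (ℕ × Fin L) := {a} ×ˢ Finset.univ with hS₁
    set S₂ : Finset (ℕ × Fin L) := T ×ˢ Finset.univ with hS₂
    have hdisj : Disjoint S₁ S₂ := by
      rw [Finset.disjoint_left]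
      rintro ⟨m, l⟩ h1 h2
      rw [hS₁, Finset.mem_product, Finset.mem_singleton] at h1
      rw [hS₂, Finset.mem_product] at h2
      exact ha (h1.1 ▸ h2.1)
    have hpair := hindep.indepFun_finset S₁ S₂ hdisj (fun p => measurable_pi_apply p)
    set UA : Set ((i : S₁) → ℝ) :=
      (⋂ l, {h : (i : S₁) → ℝ |
        h ⟨(a, l), Finset.mem_product.mpr ⟨Finset.mem_singleton_self a, Finset.mem_univ l⟩⟩
          ∈ I a l})ᶜ with hUA
    set UT : Set ((i : S₂) → ℝ) :=
      ⋂ m, ⋂ (hm : m ∈ T), (⋂ l, {h : (i : S₂) → ℝ |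
        h ⟨(m, l), Finset.mem_product.mpr ⟨hm, Finset.mem_univ l⟩⟩ ∈ I m l})ᶜ with hUT
    have hUAm : MeasurableSet UA :=
      (MeasurableSet.iInter fun l => measurableSet_preimage
        (measurable_pi_apply ((⟨(a, l), Finset.mem_product.mpr
          ⟨Finset.mem_singleton_self a, Finset.mem_univ l⟩⟩ : S₁))) (hI a l)).compl
    have hUTm : MeasurableSet UT :=
      MeasurableSet.iInter fun m => MeasurableSet.iInter fun hm =>
        (MeasurableSet.iInter fun l => measurableSet_preimage
          (measurable_pi_apply ((⟨(m, l), Finset.mem_product.mpr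
            ⟨hm, Finset.mem_univ l⟩⟩ : S₂))) (hI m l)).compl
    have hXA : (fun (g : ℕ × Fin L → ℝ) (i : S₁) => g i) ⁻¹' UA = C a := by
      ext g; simp [hUA, hC]
    have hYT : (fun (g : ℕ × Fin L → ℝ) (i : S₂) => g i) ⁻¹' UT = ⋂ m ∈ T, C m := by
      ext g; simp [hUT, hC]
    have key := hpair.measure_inter_preimage_eq_mul UA UT hUAm hUTm
    rw [hXA, hYT] at key
    rw [Finset.set_biInter_insert, key, ih, Finset.prod_insert ha]

lemma iIndepFun_eval_of_map {Ω : Type*} [MeasurableSpace Ω] (P : Measure Ω) {L : ℕ}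
    (V : Ω → (ℕ × Fin L → ℝ)) (hV : Measurable V)
    (h : iIndepFun (fun (p : ℕ × Fin L) ω => V ω p) P) :
    iIndepFun
      (fun p (g : ℕ × Fin L → ℝ) => g p) (P.map V) := by
  rw [iIndepFun_iff_measure_inter_preimage_eq_mul] at h ⊢
  intro S sets hsets
  have h1 : ∀ p ∈ S, MeasurableSet ((fun g : ℕ × Fin L → ℝ => g p) ⁻¹' sets p) :=
    fun p hp => measurableSet_preimage (measurable_pi_apply p) (hsets p hp)
  have hpre : V ⁻¹' (⋂ p ∈ S, (fun g : ℕ × Fin L → ℝ => g p) ⁻¹' sets p)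
      = ⋂ p ∈ S, (fun ω => V ω p) ⁻¹' sets p := by ext ω; simp
  rw [Measure.map_apply hV (Finset.measurableSet_biInter S h1), hpre, h S hsets]
  exact Finset.prod_congr rfl fun p hp => by
    rw [Measure.map_apply hV (h1 p hp)]; rfl

lemma key_estimate {L : ℕ} (Z : Fin L → ℝ)
    {Ω : Type*} [MeasurableSpace Ω] (P : Measure Ω) [IsProbabilityMeasure P]
    (Zhat : Ω → Fin L → ℝ) (hZhatMeas : Measurable Zhat)
    (G : ℕ → Ω → Fin L → ℝ) (hGmeas : ∀ m l, Measurable fun ω => G m ω l)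
    (hGiid : iIndepFun
      (fun (p : ℕ × Fin L) ω => G p.1 ω p.2) P)
    (hGgauss : ∀ p : ℕ × Fin L,
      Measure.map (fun ω => G p.1 ω p.2) P = gaussianReal 0 1)
    (hGindepData : IndepFun (fun ω (p : ℕ × Fin L) => G p.1 ω p.2) Zhat P)
    (zν c : ℝ) (hzν0 : 0 < zν)
    (hcL : ((√(2*π))⁻¹ * rexp (-zν^2/2)) ^ L = c)
    (ε : ℝ) (hε : 0 < ε) (hεzν : ε ≤ zν)
    (M : ℕ) (hM1 : 1 ≤ M) (r : ℝ) (hr0 : 0 < r) (hrε : r ≤ ε)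
    (q : ℝ) (hq : q = c * (2*r)^L) (hq1 : q ≤ 1) :
    (P {ω | ∀ l, |Zhat ω l - Z l| < zν - ε}).toReal - Real.exp (-(q * M)) ≤
      (P {ω | ∃ m, 1 ≤ m ∧ m ≤ M ∧ ∀ l, |Zhat ω l + G m ω l - Z l| ≤ r}).toReal := by
  classical
  have hcLpos : 0 < (√(2*π))⁻¹ * rexp (-zν^2/2) := by positivity
  have hq0 : 0 ≤ q := by
    rw [hq, ← hcL]; positivity
  set A' : Set (Fin L → ℝ) := {z | ∀ l, |z l - Z l| < zν - ε} with hA'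
  set E : Set Ω := {ω | ∃ m, 1 ≤ m ∧ m ≤ M ∧ ∀ l, |Zhat ω l + G m ω l - Z l| ≤ r} with hE
  set Vfun : Ω → (ℕ × Fin L → ℝ) := fun ω p => G p.1 ω p.2 with hVfun
  have hVmeas : Measurable Vfun := measurable_pi_lambda _ fun p => hGmeas p.1 p.2
  set S : Set ((Fin L → ℝ) × (ℕ × Fin L → ℝ)) :=
    {x | x.1 ∈ A' ∧ ∀ m ∈ Finset.Icc 1 M, ∃ l, r < |x.1 l + x.2 (m, l) - Z l|} with hS
  have hA'meas : MeasurableSet A' := by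
    have : A' = ⋂ l, {z : Fin L → ℝ | |z l - Z l| < zν - ε} := by ext z; simp [hA']
    rw [this]
    exact MeasurableSet.iInter fun l =>
      measurableSet_lt (((measurable_pi_apply l).sub measurable_const).abs) measurable_const
  have hSmeas : MeasurableSet S := by
    have : S = (Prod.fst ⁻¹' A') ∩ ⋂ m ∈ Finset.Icc 1 M,
        ⋃ l, {x : (Fin L → ℝ) × (ℕ × Fin L → ℝ) | r < |x.1 l + x.2 (m, l) - Z l|} := by
      ext x; simp [hS]
    rw [this]
    refine (hA'meas.preimage measurable_fst).inter ?_
    refine MeasurableSet.biInter (Finset.Icc 1 M).countable_toSet fun m _ =>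
      MeasurableSet.iUnion fun l => ?_
    have m1 : Measurable fun x : (Fin L → ℝ) × (ℕ × Fin L → ℝ) => x.1 l :=
      (measurable_pi_apply l).comp measurable_fst
    have m2 : Measurable fun x : (Fin L → ℝ) × (ℕ × Fin L → ℝ) => x.2 (m, l) :=
      (measurable_pi_apply (m, l)).comp measurable_snd
    exact measurableSet_lt measurable_const (((m1.add m2).sub measurable_const).abs)
  have hsplit : Zhat ⁻¹' A' ⊆ E ∪ ((fun ω => (Zhat ω, Vfun ω)) ⁻¹' S) := by
    intro ω hω
    by_cases hωE : ω ∈ E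
    · exact Or.inl hωE
    · refine Or.inr ⟨hω, fun m hm => ?_⟩
      rw [Finset.mem_Icc] at hm
      by_contra hcon
      push_neg at hcon
      exact hωE ⟨m, hm.1, hm.2, fun l => hcon l⟩
  have hmap : Measure.map (fun ω => (Zhat ω, Vfun ω)) P
      = (P.map Zhat).prod (P.map Vfun) :=
    (indepFun_iff_map_prod_eq_prod_map_map hZhatMeas.aemeasurable
      hVmeas.aemeasurable).mp hGindepData.symm
  haveI : IsProbabilityMeasure (P.map Zhat) :=
    Measure.isProbabilityMeasure_map hZhatMeas.aemeasurable
  haveI : IsProbabilityMeasure (P.map Vfun) :=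
    Measure.isProbabilityMeasure_map hVmeas.aemeasurable
  have hindepV : iIndepFun
      (fun p (g : ℕ × Fin L → ℝ) => g p) (P.map Vfun) :=
    iIndepFun_eval_of_map P Vfun hVmeas hGiid
  have hlaw : ∀ p : ℕ × Fin L,
      (P.map Vfun).map (fun g : ℕ × Fin L → ℝ => g p) = gaussianReal 0 1 := by
    intro p
    rw [Measure.map_map (measurable_pi_apply p) hVmeas]
    exact hGgauss p
  have hinner : ∀ z : Fin L → ℝ,
      (P.map Vfun) (Prod.mk z ⁻¹' S) ≤ ENNReal.ofReal (rexp (-(q * M))) := by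
    intro z
    by_cases hz : z ∈ A'
    · set I : ℕ → Fin L → Set ℝ :=
        fun _ l => Icc (Z l - z l - r) (Z l - z l + r) with hI
      set C : ℕ → Set (ℕ × Fin L → ℝ) :=
        fun m => (⋂ l, (fun g : ℕ × Fin L → ℝ => g (m, l)) ⁻¹' I m l)ᶜ with hCdef
      have hptiff : ∀ (m : ℕ) (l : Fin L) (g : ℕ × Fin L → ℝ),
          (r < |z l + g (m, l) - Z l|) ↔ g (m, l) ∉ I m l := by
        intro m l g
        simp only [hI, Set.mem_Icc, not_and_or, not_le]
        rw [lt_abs]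
        constructor
        · rintro (h | h)
          · right; linarith
          · left; linarith
        · rintro (h | h)
          · right; linarith
          · left; linarith
      have hpre : Prod.mk z ⁻¹' S = ⋂ m ∈ Finset.Icc 1 M, C m := by
        ext g
        simp only [mem_preimage, hS, Set.mem_setOf_eq, hz, true_and, Set.mem_iInter,
          hCdef, Set.mem_compl_iff, not_forall]
        constructor
        · intro h m hm
          obtain ⟨l, hl⟩ := h m hm
          exact ⟨l, (hptiff m l g).mp hl⟩
        · intro h m hm
          obtain ⟨l, hl⟩ := h m hm
          exact ⟨l, (hptiff m l g).mpr hl⟩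
      have hCm : ∀ m, (P.map Vfun) (C m) ≤ ENNReal.ofReal (1 - q) := by
        intro m
        have hhitmeas : MeasurableSet
            (⋂ l, (fun g : ℕ × Fin L → ℝ => g (m, l)) ⁻¹' I m l) :=
          MeasurableSet.iInter fun l =>
            measurableSet_preimage (measurable_pi_apply _) measurableSet_Icc
        have hhit : ENNReal.ofReal q ≤
            (P.map Vfun) (⋂ l, (fun g : ℕ × Fin L → ℝ => g (m, l)) ⁻¹' I m l) := by
          have hCthe : (⋂ l, (fun g : ℕ × Fin L → ℝ => g (m, l)) ⁻¹' I m l)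
              = ⋂ p ∈ ({m} ×ˢ (Finset.univ : Finset (Fin L))),
                  (fun g : ℕ × Fin L → ℝ => g p) ⁻¹' I p.1 p.2 := by
            ext g
            simp only [Set.mem_iInter, mem_preimage]
            constructor
            · rintro hg ⟨m', l⟩ hp
              rw [Finset.mem_product, Finset.mem_singleton] at hp
              rcases hp with ⟨rfl, -⟩
              exact hg l
            · intro hg l
              exact hg (m, l) (Finset.mem_product.mpr
                ⟨Finset.mem_singleton_self m, Finset.mem_univ l⟩)
          rw [hCthe, (iIndepFun_iff_measure_inter_preimage_eq_mul.mp hindepV)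
            ({m} ×ˢ (Finset.univ : Finset (Fin L)))
            (fun p hp => (measurableSet_Icc : MeasurableSet (I p.1 p.2)))]
          have hfac : ∀ p : ℕ × Fin L,
              ENNReal.ofReal ((2*r) * ((√(2*π))⁻¹ * rexp (-zν^2/2))) ≤
                (P.map Vfun) ((fun g : ℕ × Fin L → ℝ => g p) ⁻¹' I p.1 p.2) := by
            intro p
            have : (P.map Vfun) ((fun g : ℕ × Fin L → ℝ => g p) ⁻¹' I p.1 p.2)
                = gaussianReal 0 1 (I p.1 p.2) := by
              rw [← hlaw p, Measure.map_apply (measurable_pi_apply p) measurableSet_Icc]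
            rw [this]
            exact gaussian_Icc_lower hr0.le (by
              have h1 : |z p.2 - Z p.2| < zν - ε := hz p.2
              have h2 : |Z p.2 - z p.2| = |z p.2 - Z p.2| := abs_sub_comm _ _
              linarith)
          calc ENNReal.ofReal q
              = ENNReal.ofReal ((2*r) * ((√(2*π))⁻¹ * rexp (-zν^2/2))) ^ L := by
                rw [← ENNReal.ofReal_pow (by positivity), mul_pow, hcL, hq, mul_comm]
            _ = ∏ p ∈ ({m} ×ˢ (Finset.univ : Finset (Fin L))),
                  ENNReal.ofReal ((2*r) * ((√(2*π))⁻¹ * rexp (-zν^2/2))) := by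
                rw [Finset.prod_const, Finset.card_product, Finset.card_singleton,
                  Finset.card_univ, Fintype.card_fin, one_mul]
            _ ≤ ∏ p ∈ ({m} ×ˢ (Finset.univ : Finset (Fin L))),
                  (P.map Vfun) ((fun g : ℕ × Fin L → ℝ => g p) ⁻¹' I p.1 p.2) :=
                Finset.prod_le_prod' fun p _ => hfac p
        calc (P.map Vfun) (C m)
            = 1 - (P.map Vfun) (⋂ l, (fun g : ℕ × Fin L → ℝ => g (m, l)) ⁻¹' I m l) := by
              rw [hCdef]
              rw [measure_compl hhitmeas (measure_ne_top _ _), measure_univ]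
          _ ≤ 1 - ENNReal.ofReal q := tsub_le_tsub_left hhit 1
          _ = ENNReal.ofReal (1 - q) := by
              rw [ENNReal.ofReal_sub 1 hq0, ENNReal.ofReal_one]
      rw [hpre, prod_of_blocks (P.map Vfun) hindepV C I
        (fun m l => measurableSet_Icc) (fun m => rfl) (Finset.Icc 1 M)]
      calc ∏ m ∈ Finset.Icc 1 M, (P.map Vfun) (C m)
          ≤ ∏ _m ∈ Finset.Icc 1 M, ENNReal.ofReal (1 - q) :=
            Finset.prod_le_prod' fun m _ => hCm m
        _ = ENNReal.ofReal (1 - q) ^ M := by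
            rw [Finset.prod_const, Nat.card_Icc]
            simp
        _ = ENNReal.ofReal ((1 - q) ^ M) := by
            rw [ENNReal.ofReal_pow (by linarith)]
        _ ≤ ENNReal.ofReal (rexp (-q) ^ M) := by
            apply ENNReal.ofReal_le_ofReal
            exact pow_le_pow_left₀ (by linarith) (by linarith [Real.add_one_le_exp (-q)]) M
        _ = ENNReal.ofReal (rexp (-(q * M))) := by
            rw [← Real.exp_nat_mul]
            congr 1
            ring
    · have hempty : Prod.mk z ⁻¹' S = ∅ := by
        ext g; simp [hS, hz]
      simp [hempty]
  have hSbound : P ((fun ω => (Zhat ω, Vfun ω)) ⁻¹' S)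
      ≤ ENNReal.ofReal (rexp (-(q * M))) := by
    rw [← Measure.map_apply (hZhatMeas.prodMk hVmeas) hSmeas, hmap,
      Measure.prod_apply hSmeas]
    calc ∫⁻ z, (P.map Vfun) (Prod.mk z ⁻¹' S) ∂(P.map Zhat)
        ≤ ∫⁻ _, ENNReal.ofReal (rexp (-(q * M))) ∂(P.map Zhat) :=
          lintegral_mono fun z => hinner z
      _ = ENNReal.ofReal (rexp (-(q * M))) := by simp
  have hA : P (Zhat ⁻¹' A') ≤ P E + ENNReal.ofReal (rexp (-(q * M))) :=
    le_trans (measure_mono hsplit)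
      (le_trans (measure_union_le _ _) (add_le_add_right hSbound _))
  have hfin := ENNReal.toReal_mono (by finiteness) hA
  rw [ENNReal.toReal_add (measure_ne_top _ _) ENNReal.ofReal_ne_top,
    ENNReal.toReal_ofReal (Real.exp_nonneg _)] at hfin
  have hAeq : Zhat ⁻¹' A' = {ω | ∀ l, |Zhat ω l - Z l| < zν - ε} := rfl
  rw [hAeq] at hfin
  linarith

end AuxLemmas

open Set in
set_option maxHeartbeats 2000000 in
/-- **Corollary 1 of the paper.** The resampling guarantee for Fisher's
z-transformed partial correlations (unit scales): if `limsup_n P(|Ẑ_{n,l} − Z_l| ≥ z) ≤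
2(1 − Φ(z))` for every coordinate `l` and `z > 0`, and `Ẑ_n^{[m]} = Ẑ_n + G_{n,m}` with
i.i.d. standard Gaussian noise independent of the data, then
`liminf_n liminf_M P(min_{1≤m≤M} max_l |Ẑ_{n,l}^{[m]} − Z_l| ≤ err_n(M,ν)) ≥ 1 − ν`,
where `err_n(M,ν) = (1/2)(2 log n /(c(ν) M))^{1/L}` and
`c(ν) = (2π)^{−L/2} exp(−(L/2) z_ν²)` with `Φ(z_ν) = 1 − ν/(2L)`. -/
theorem resampled_fisher_z_min_max_coverage
    (L : ℕ) (hL : 1 ≤ L) (Z : Fin L → ℝ)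
    {Ω : ℕ → Type*} [∀ n, MeasurableSpace (Ω n)]
    (P : ∀ n, Measure (Ω n)) [∀ n, IsProbabilityMeasure (P n)]
    (Zhat : ∀ n, Ω n → Fin L → ℝ)
    (hZhatMeas : ∀ n, Measurable (Zhat n))
    (G : ∀ n, ℕ → Ω n → Fin L → ℝ)
    (hGmeas : ∀ n m l, Measurable (fun ω => G n m ω l))
    (hGiid : ∀ n, ProbabilityTheory.iIndepFun
      (fun (p : ℕ × Fin L) (ω : Ω n) => G n p.1 ω p.2) (P n))
    (hGgauss : ∀ n (p : ℕ × Fin L),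
      Measure.map (fun ω => G n p.1 ω p.2) (P n) = ProbabilityTheory.gaussianReal 0 1)
    (hGindepData : ∀ n, ProbabilityTheory.IndepFun
      (fun (ω : Ω n) (p : ℕ × Fin L) => G n p.1 ω p.2) (Zhat n) (P n))
    (htail : ∀ (l : Fin L) (z : ℝ), 0 < z →
      Filter.limsup (fun n => (P n {ω | z ≤ |Zhat n ω l - Z l|}).toReal)
        Filter.atTop ≤ 2 * (1 - stdGaussianCDF z))
    (ν : ℝ) (hν0 : 0 < ν) (hν : ν ≤ 1 / 2)
    (zν : ℝ) (hzν0 : 0 < zν) (hzν : stdGaussianCDF zν = 1 - ν / (2 * L))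
    (c : ℝ) (hc : c = (2 * Real.pi) ^ (-(L : ℝ) / 2) * Real.exp (-((L : ℝ) / 2) * zν ^ 2))
    (err : ℕ → ℕ → ℝ)
    (herr : ∀ n M, err n M = (1 / 2) * (2 * Real.log n / (c * M)) ^ (1 / (L : ℝ))) :
    1 - ν ≤
      Filter.liminf (fun n : ℕ =>
        Filter.liminf (fun M : ℕ =>
          (P n {ω | ∃ m, 1 ≤ m ∧ m ≤ M ∧
            ∀ l, |Zhat n ω l + G n m ω l - Z l| ≤ err n M}).toReal)
          Filter.atTop) Filter.atTop := by
  classical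
  have hLpos : (0:ℝ) < L := by exact_mod_cast hL
  have hLne : (L:ℝ) ≠ 0 := ne_of_gt hLpos
  have hcL : ((√(2*π))⁻¹ * rexp (-zν^2/2)) ^ L = c := by
    rw [hc, mul_pow]
    congr 1
    · rw [Real.sqrt_eq_rpow, ← Real.rpow_neg (by positivity), ← Real.rpow_natCast
        ((2*π) ^ (-(1/2:ℝ))) L, ← Real.rpow_mul (by positivity)]
      congr 1
      ring
    · rw [← Real.exp_nat_mul]
      congr 1
      ring
  have hcpos : 0 < c := by rw [← hcL]; positivity
  -- abbreviations
  set p : ℕ → ℕ → ℝ := fun n M =>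
    (P n {ω | ∃ m, 1 ≤ m ∧ m ≤ M ∧
      ∀ l, |Zhat n ω l + G n m ω l - Z l| ≤ err n M}).toReal with hp
  have hp1 : ∀ n M, p n M ≤ 1 := by
    intro n M
    rw [hp]
    exact ENNReal.toReal_le_of_le_ofReal zero_le_one (by simpa using prob_le_one)
  have hp0 : ∀ n M, 0 ≤ p n M := fun n M => ENNReal.toReal_nonneg
  set F : ℕ → ℝ := fun n => liminf (p n) atTop with hF
  show 1 - ν ≤ liminf F atTop
  have hF1 : ∀ n, F n ≤ 1 := fun n =>
    liminf_le_of_frequently_le (Frequently.of_forall fun M => hp1 n M)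
      (isBoundedUnder_of ⟨0, fun M => hp0 n M⟩)
  refine le_of_forall_pos_le_add fun η hη => ?_
  rw [← sub_le_iff_le_add]
  -- choose ε
  set ε : ℝ := min (η/(4*L)) (zν/2) with hεdef
  have hε0 : 0 < ε := lt_min (by positivity) (by positivity)
  have hεzν : ε ≤ zν := le_trans (min_le_right _ _) (by linarith)
  have hεη : ε ≤ η/(4*L) := min_le_left _ _
  have hzνε : 0 < zν - ε := by
    have := min_le_right (η/(4*L)) (zν/2); have h2 : ε ≤ zν/2 := this
    linarith
  set B : ℝ := 2 * (1 - stdGaussianCDF (zν - ε)) with hB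
  have hBbound : B ≤ ν/L + 2*ε := by
    have hlip := stdGaussianCDF_lip (show zν - ε ≤ zν by linarith)
    rw [hzν] at hlip
    have hL1 : 2 * (ν / (2 * (L:ℝ))) = ν/L := by field_simp
    rw [hB]
    nlinarith
  -- the A-event lower bound, per n
  set tail : Fin L → ℕ → ℝ := fun l n =>
    (P n {ω | zν - ε ≤ |Zhat n ω l - Z l|}).toReal with htaildef
  have htail1 : ∀ l n, tail l n ≤ 1 := fun l n =>
    ENNReal.toReal_le_of_le_ofReal zero_le_one (by simpa using prob_le_one)
  have htailB : ∀ l, limsup (tail l) atTop ≤ B := fun l => htail l (zν - ε) hzνε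
  have hPA : ∀ n, 1 - ∑ l, tail l n ≤
      (P n {ω | ∀ l, |Zhat n ω l - Z l| < zν - ε}).toReal := by
    intro n
    set A : Set (Ω n) := {ω | ∀ l, |Zhat n ω l - Z l| < zν - ε} with hA
    have hAmeas : MeasurableSet A := by
      have : A = ⋂ l, {ω | |Zhat n ω l - Z l| < zν - ε} := by ext ω; simp [hA]
      rw [this]
      exact MeasurableSet.iInter fun l => measurableSet_lt
        ((((measurable_pi_apply l).comp (hZhatMeas n)).sub measurable_const).abs)
        measurable_const
    have hsub : Aᶜ ⊆ ⋃ l, {ω | zν - ε ≤ |Zhat n ω l - Z l|} := by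
      intro ω hω
      rw [hA, Set.mem_compl_iff, Set.mem_setOf_eq, not_forall] at hω
      obtain ⟨l, hl⟩ := hω
      exact Set.mem_iUnion.mpr ⟨l, not_lt.mp hl⟩
    have hcompl : (P n) Aᶜ ≤ ∑ l, (P n) {ω | zν - ε ≤ |Zhat n ω l - Z l|} :=
      le_trans (measure_mono hsub) (by
        exact measure_iUnion_fintype_le _ _)
    have hsum : ((∑ l, (P n) {ω | zν - ε ≤ |Zhat n ω l - Z l|})).toReal
        = ∑ l, tail l n :=
      ENNReal.toReal_sum fun l _ => measure_ne_top _ _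
    have hAc : ((P n) Aᶜ).toReal ≤ ∑ l, tail l n := by
      rw [← hsum]
      exact ENNReal.toReal_mono (by
        exact ENNReal.sum_ne_top.mpr fun l _ => measure_ne_top _ _) hcompl
    have hone : ((P n) A).toReal + ((P n) Aᶜ).toReal = 1 := by
      rw [← ENNReal.toReal_add (measure_ne_top _ _) (measure_ne_top _ _),
        measure_add_measure_compl hAmeas]
      simp
    linarith
  -- eventually in n
  have hevtail : ∀ᶠ n in atTop, ∀ l, tail l n < B + η/(4*L) := by
    rw [eventually_all]
    intro l
    exact eventually_lt_of_limsup_lt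
      (lt_of_le_of_lt (htailB l) (lt_add_of_pos_right _ (by positivity)))
      (isBoundedUnder_of ⟨1, fun n => htail1 l n⟩)
  have hevexp : ∀ᶠ n : ℕ in atTop, rexp (-(2 * Real.log n)) ≤ η/4 := by
    have hlog : Tendsto (fun n : ℕ => Real.log n) atTop atTop :=
      Real.tendsto_log_atTop.comp (tendsto_natCast_atTop_atTop (R := ℝ))
    have h2 : Tendsto (fun n : ℕ => 2 * Real.log n) atTop atTop :=
      hlog.const_mul_atTop two_pos
    have h3 : Tendsto (fun n : ℕ => -(2 * Real.log n)) atTop atBot :=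
      tendsto_neg_atTop_atBot.comp h2
    have h1 : Tendsto (fun n : ℕ => rexp (-(2 * Real.log n))) atTop (nhds 0) :=
      Real.tendsto_exp_atBot.comp h3
    exact (h1.eventually_lt_const (by positivity : (0:ℝ) < η/4)).mono
      fun n hn => hn.le
  have hev2 : ∀ᶠ n : ℕ in atTop, 2 ≤ n := eventually_ge_atTop 2
  refine le_liminf_of_le (isBoundedUnder_of ⟨1, fun n => hF1 n⟩).isCoboundedUnder_ge ?_
  filter_upwards [hevtail, hevexp, hev2] with n htl hexp hn2
  -- inner liminf
  have hn1 : (1:ℝ) < n := by exact_mod_cast hn2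
  have hlogpos : 0 < Real.log n := Real.log_pos hn1
  have hK : 0 < c * (2*ε)^L := by positivity
  have hMev : ∀ᶠ M : ℕ in atTop,
      1 - ν - η ≤ p n M := by
    filter_upwards [eventually_ge_atTop (max (Nat.ceil (2*Real.log n))
      (Nat.ceil (2*Real.log n/(c*(2*ε)^L))) + 1)] with M hM
    have hM1 : 1 ≤ M := le_trans (by omega) hM
    have hMpos : (0:ℝ) < M := by
      have : 0 < M := by omega
      exact_mod_cast this
    have hMge1 : Nat.ceil (2*Real.log n) < M := by omega
    have hMge2 : Nat.ceil (2*Real.log n/(c*(2*ε)^L)) < M := by omega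
    have hMq : 2*Real.log n / M ≤ 1 := by
      rw [div_le_one hMpos]
      calc 2*Real.log n ≤ (Nat.ceil (2*Real.log n) : ℝ) := Nat.le_ceil _
        _ ≤ M := by exact_mod_cast hMge1.le
    have hMr2 : 2*Real.log n/(c*(2*ε)^L) ≤ M := by
      calc 2*Real.log n/(c*(2*ε)^L)
          ≤ (Nat.ceil (2*Real.log n/(c*(2*ε)^L)) : ℝ) := Nat.le_ceil _
        _ ≤ M := by exact_mod_cast hMge2.le
    set t : ℝ := 2*Real.log n/(c*M) with ht
    have ht0 : 0 < t := by positivity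
    have hrval : err n M = (1/2) * t ^ (1/(L:ℝ)) := by rw [herr]
    have hr0 : 0 < err n M := by rw [hrval]; positivity
    have h2r : 2 * err n M = t ^ (1/(L:ℝ)) := by rw [hrval]; ring
    have h2rL : (2 * err n M)^L = t := by
      rw [h2r, ← Real.rpow_natCast (t ^ (1/(L:ℝ))) L, ← Real.rpow_mul ht0.le,
        one_div, inv_mul_cancel₀ hLne, Real.rpow_one]
    have htle : t ≤ (2*ε)^L := by
      rw [ht, div_le_iff₀ (by positivity)]
      calc 2*Real.log n = (2*Real.log n/(c*(2*ε)^L)) * (c*(2*ε)^L) := by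
            rw [div_mul_cancel₀ _ (ne_of_gt hK)]
        _ ≤ M * (c*(2*ε)^L) := mul_le_mul_of_nonneg_right hMr2 hK.le
        _ = (2*ε)^L * (c*M) := by ring
    have hrε : err n M ≤ ε := by
      have h1 : t ^ (1/(L:ℝ)) ≤ ((2*ε)^L) ^ (1/(L:ℝ)) :=
        Real.rpow_le_rpow ht0.le htle (by positivity)
      have h2 : (((2*ε)^L : ℝ)) ^ (1/(L:ℝ)) = 2*ε := by
        rw [← Real.rpow_natCast (2*ε) L, ← Real.rpow_mul (by positivity),
          mul_one_div, div_self hLne, Real.rpow_one]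
      rw [h2] at h1
      rw [hrval]
      nlinarith
    set q : ℝ := c * (2 * err n M)^L with hqdef
    have hqt : q = 2*Real.log n / M := by
      rw [hqdef, h2rL, ht]
      field_simp
    have hq1 : q ≤ 1 := by rw [hqt]; exact hMq
    have hqM : q * M = 2*Real.log n := by
      rw [hqt]
      field_simp
    have hkey := key_estimate Z (P n) (Zhat n) (hZhatMeas n) (G n) (hGmeas n)
      (hGiid n) (hGgauss n) (hGindepData n) zν c hzν0 hcL ε hε0 hεzν M hM1
      (err n M) hr0 hrε q hqdef hq1
    rw [hqM] at hkey
    have hsumtail : ∑ l, tail l n ≤ L * (B + η/(4*L)) := by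
      calc ∑ l, tail l n ≤ ∑ _l : Fin L, (B + η/(4*L)) :=
            Finset.sum_le_sum fun l _ => (htl l).le
        _ = L * (B + η/(4*L)) := by
            rw [Finset.sum_const, Finset.card_univ, Fintype.card_fin, nsmul_eq_mul]
    have harith : 1 - ν - η ≤ (1 - ∑ l, tail l n) - η/4 := by
      have hνL : (L:ℝ) * (ν/L) = ν := by field_simp
      have h1 : (L:ℝ) * B ≤ ν + 2*L*ε := by nlinarith [hBbound, hνL, hLpos]
      have h2 : (L:ℝ) * (η/(4*L)) = η/4 := by field_simp
      have h3 : (L:ℝ)*ε ≤ η/4 := by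
        calc (L:ℝ)*ε ≤ L * (η/(4*L)) := by nlinarith [hεη]
          _ = η/4 := h2
      nlinarith [hsumtail]
    calc 1 - ν - η ≤ (1 - ∑ l, tail l n) - η/4 := harith
      _ ≤ ((P n) {ω | ∀ l, |Zhat n ω l - Z l| < zν - ε}).toReal
            - rexp (-(2*Real.log n)) := by
          have := hPA n
          linarith [hexp]
      _ ≤ p n M := hkey
  exact le_liminf_of_le (isBoundedUnder_of ⟨1, fun M => hp1 n M⟩).isCoboundedUnder_ge hMev
end

section
/- Let L ≥ 1, let Z be a standard Gaussian vector in ℝ^L (i.e., its L coordinates are i.i.d. N(0,1)), let u ∈ ℝ^L, and let ε > 0. Then P( max_{1≤l≤L} |Z_l − u_l| ≤ ε ) ≥ (2ε)^L · ( (2π)^{−L/2} e^{−‖u‖₂²/2} − (2π)^{−L/2} e^{−1/2} √L ε ). -/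
open MeasureTheory ProbabilityTheory Real

lemma gsb_abs_mul_exp_le (t : ℝ) : |t| * Real.exp (-t ^ 2 / 2) ≤ Real.exp (-(1 : ℝ) / 2) := by
  have h1 : |t| ≤ Real.exp ((t ^ 2 - 1) / 2) := by
    have h := Real.add_one_le_exp ((t ^ 2 - 1) / 2)
    nlinarith [sq_nonneg (|t| - 1), sq_abs t]
  calc |t| * Real.exp (-t ^ 2 / 2)
      ≤ Real.exp ((t ^ 2 - 1) / 2) * Real.exp (-t ^ 2 / 2) :=
        mul_le_mul_of_nonneg_right h1 (Real.exp_nonneg _)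
    _ = Real.exp (-(1 : ℝ) / 2) := by rw [← Real.exp_add]; ring_nf

lemma gsb_lip (a b : ℝ) :
    |Real.exp (-a ^ 2 / 2) - Real.exp (-b ^ 2 / 2)| ≤ Real.exp (-(1 : ℝ) / 2) * |a - b| := by
  have hder : ∀ t : ℝ, HasDerivAt (fun s : ℝ => Real.exp (-s ^ 2 / 2))
      (Real.exp (-t ^ 2 / 2) * (-t)) t := by
    intro t
    have h1 : HasDerivAt (fun s : ℝ => -s ^ 2 / 2) (-t) t := by
      have := ((hasDerivAt_pow 2 t).neg.div_const 2)
      simpa using this.congr_deriv (by ring)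
    exact h1.exp
  have := Convex.norm_image_sub_le_of_norm_hasDerivWithin_le
    (f := fun s : ℝ => Real.exp (-s ^ 2 / 2))
    (f' := fun t => Real.exp (-t ^ 2 / 2) * (-t))
    (s := Set.univ)
    (fun t _ => (hder t).hasDerivWithinAt)
    (fun t _ => by
      rw [Real.norm_eq_abs, abs_mul, abs_neg, abs_of_pos (Real.exp_pos _)]
      rw [mul_comm]
      exact gsb_abs_mul_exp_le t)
    convex_univ (Set.mem_univ b) (Set.mem_univ a)
  simpa [Real.norm_eq_abs] using this

lemma gsb_exp_lower {L : ℕ} (u x : Fin L → ℝ) (ε : ℝ) (hε : 0 ≤ ε)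
    (h : ∀ l, |x l - u l| ≤ ε) :
    Real.exp (-(∑ l, (u l) ^ 2) / 2) - Real.exp (-(1 : ℝ) / 2) * Real.sqrt L * ε ≤
      Real.exp (-(∑ l, (x l) ^ 2) / 2) := by
  set X : EuclideanSpace ℝ (Fin L) := (WithLp.equiv 2 (Fin L → ℝ)).symm x
  set U : EuclideanSpace ℝ (Fin L) := (WithLp.equiv 2 (Fin L → ℝ)).symm u
  have hXn : ‖X‖ ^ 2 = ∑ l, (x l) ^ 2 := by
    rw [EuclideanSpace.norm_eq, Real.sq_sqrt (by positivity)]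
    simp [X, Real.norm_eq_abs, sq_abs]
  have hUn : ‖U‖ ^ 2 = ∑ l, (u l) ^ 2 := by
    rw [EuclideanSpace.norm_eq, Real.sq_sqrt (by positivity)]
    simp [U, Real.norm_eq_abs, sq_abs]
  have hXU : ‖X - U‖ ≤ Real.sqrt L * ε := by
    have h1 : ‖X - U‖ = Real.sqrt (∑ l, (x l - u l) ^ 2) := by
      rw [EuclideanSpace.norm_eq]
      congr 1
      refine Finset.sum_congr rfl fun l _ => ?_
      simp [X, U, Real.norm_eq_abs, sq_abs]
    rw [h1]
    have h2 : (∑ l, (x l - u l) ^ 2) ≤ (L : ℝ) * ε ^ 2 := by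
      calc (∑ l, (x l - u l) ^ 2) ≤ ∑ _l : Fin L, ε ^ 2 := by
            refine Finset.sum_le_sum fun l _ => ?_
            have := h l
            nlinarith [abs_nonneg (x l - u l), sq_abs (x l - u l)]
        _ = (L : ℝ) * ε ^ 2 := by simp [mul_comm]
    calc Real.sqrt (∑ l, (x l - u l) ^ 2) ≤ Real.sqrt ((L : ℝ) * ε ^ 2) :=
          Real.sqrt_le_sqrt h2
      _ = Real.sqrt L * ε := by
          rw [Real.sqrt_mul (Nat.cast_nonneg L), Real.sqrt_sq hε]
  have hlip := gsb_lip ‖X‖ ‖U‖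
  rw [hXn, hUn] at hlip
  have habs : |‖X‖ - ‖U‖| ≤ ‖X - U‖ := abs_norm_sub_norm_le X U
  have : |Real.exp (-(∑ l, (x l) ^ 2) / 2) - Real.exp (-(∑ l, (u l) ^ 2) / 2)| ≤
      Real.exp (-(1 : ℝ) / 2) * (Real.sqrt L * ε) := by
    refine hlip.trans ?_
    have := habs.trans hXU
    exact mul_le_mul_of_nonneg_left this (Real.exp_nonneg _)
  have h2 := (abs_le.mp this).1
  linarith




/-- Small-ball lower bound for a standard Gaussian vector `Z` in `ℝ^L`:
`P(max_l |Z_l − u_l| ≤ ε) ≥ (2ε)^L ((2π)^{−L/2} e^{−‖u‖₂²/2} − (2π)^{−L/2} e^{−1/2} √L ε)`. -/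
theorem gaussian_small_ball_lower_bound {Ω : Type*} [MeasurableSpace Ω]
    (P : Measure Ω) [IsProbabilityMeasure P]
    (L : ℕ) (hL : 1 ≤ L) (Z : Ω → Fin L → ℝ)
    (hmeas : ∀ l, Measurable (fun ω => Z ω l))
    (hindep : ProbabilityTheory.iIndepFun
      (fun l ω => Z ω l) P)
    (hgauss : ∀ l, Measure.map (fun ω => Z ω l) P = ProbabilityTheory.gaussianReal 0 1)
    (u : Fin L → ℝ) (ε : ℝ) (hε : 0 < ε) :
    (2 * ε) ^ L *
        ((2 * Real.pi) ^ (-(L : ℝ) / 2) * Real.exp (-(∑ l, (u l) ^ 2) / 2) -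
          (2 * Real.pi) ^ (-(L : ℝ) / 2) * Real.exp (-(1 : ℝ) / 2) * Real.sqrt L * ε) ≤
      (P {ω | ∀ l, |Z ω l - u l| ≤ ε}).toReal := by
  set g : ℝ → ℝ := gaussianPDFReal 0 1 with hg
  set I : Fin L → Set ℝ := fun l => Set.Icc (u l - ε) (u l + ε) with hI
  set B : Set (Fin L → ℝ) := Set.univ.pi I with hB
  -- Step 1: event probability = product of gaussian measures of intervals
  have hset : {ω | ∀ l, |Z ω l - u l| ≤ ε} = ⋂ l, (fun ω => Z ω l) ⁻¹' I l := by
    ext ω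
    simp only [Set.mem_setOf_eq, Set.mem_iInter, Set.mem_preimage, hI, Set.mem_Icc, abs_le]
    constructor
    · intro h l; have := h l; constructor <;> linarith [this.1, this.2]
    · intro h l; have := h l; constructor <;> linarith [this.1, this.2]
  have hP : P {ω | ∀ l, |Z ω l - u l| ≤ ε} = ∏ l, gaussianReal 0 1 (I l) := by
    rw [hset]
    have h1 := hindep.measure_inter_preimage_eq_mul Finset.univ
      (sets := I) (fun l _ => measurableSet_Icc)
    simp only [Finset.mem_univ, Set.iInter_true] at h1
    rw [h1]
    refine Finset.prod_congr rfl fun l _ => ?_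
    rw [← Measure.map_apply (hmeas l) measurableSet_Icc, hgauss l]
  -- Step 2: toReal as product of real integrals
  have htoReal : (P {ω | ∀ l, |Z ω l - u l| ≤ ε}).toReal = ∏ l, ∫ x in I l, g x := by
    rw [hP, ENNReal.toReal_prod]
    refine Finset.prod_congr rfl fun l _ => ?_
    rw [gaussianReal_apply_eq_integral 0 one_ne_zero (I l),
      ENNReal.toReal_ofReal (integral_nonneg fun x => gaussianPDFReal_nonneg _ _ _)]
  -- Step 3: Fubini
  have hfub : ∏ l, ∫ x in I l, g x = ∫ x in B, ∏ l, g (x l) := by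
    have h1 : (∫ x : Fin L → ℝ, ∏ l, (I l).indicator g (x l)) =
        ∏ l, ∫ x, (I l).indicator g x :=
      integral_fintype_prod_eq_prod (fun l => (I l).indicator g)
    have h2 : ∀ x : Fin L → ℝ, ∏ l, (I l).indicator g (x l) =
        B.indicator (fun y => ∏ l, g (y l)) x := by
      intro x
      by_cases hx : x ∈ B
      · rw [Set.indicator_of_mem hx]
        exact Finset.prod_congr rfl fun l _ =>
          Set.indicator_of_mem (hx l (Set.mem_univ l)) g
      · rw [Set.indicator_of_notMem hx]
        rw [hB, Set.mem_univ_pi] at hx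
        push_neg at hx
        obtain ⟨l, hl⟩ := hx
        exact Finset.prod_eq_zero (Finset.mem_univ l) (Set.indicator_of_notMem hl g)
      
    calc ∏ l, ∫ x in I l, g x = ∏ l, ∫ x, (I l).indicator g x := by
          refine Finset.prod_congr rfl fun l _ => ?_
          rw [integral_indicator measurableSet_Icc]
      _ = ∫ x : Fin L → ℝ, ∏ l, (I l).indicator g (x l) := h1.symm
      _ = ∫ x : Fin L → ℝ, B.indicator (fun y => ∏ l, g (y l)) x := by
          refine integral_congr_ae (Filter.Eventually.of_forall fun x => h2 x)
      _ = ∫ x in B, ∏ l, g (x l) := by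
          rw [integral_indicator (MeasurableSet.univ_pi fun l => measurableSet_Icc)]
  -- Step 4: constants
  have h2pi : (0:ℝ) ≤ 2 * Real.pi := by positivity
  set K : ℝ := (2 * Real.pi) ^ (-(L : ℝ) / 2) with hK
  have hKpos : 0 < K := Real.rpow_pos_of_pos (by positivity) _
  have hgx : ∀ t : ℝ, g t = (Real.sqrt (2 * Real.pi))⁻¹ * Real.exp (-t ^ 2 / 2) := by
    intro t
    simp [hg, gaussianPDFReal]
  have hKeq : (Real.sqrt (2 * Real.pi))⁻¹ ^ L = K := by
    rw [Real.sqrt_eq_rpow, ← Real.rpow_neg h2pi, ← Real.rpow_natCast ((2*Real.pi) ^ (-(1/2) : ℝ)) L,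
      ← Real.rpow_mul h2pi, hK]
    congr 1
    ring
  have hprod : ∀ x : Fin L → ℝ, ∏ l, g (x l) = K * Real.exp (-(∑ l, (x l) ^ 2) / 2) := by
    intro x
    calc ∏ l, g (x l) = ∏ l, ((Real.sqrt (2 * Real.pi))⁻¹ * Real.exp (-(x l) ^ 2 / 2)) :=
          Finset.prod_congr rfl fun l _ => hgx (x l)
      _ = (Real.sqrt (2 * Real.pi))⁻¹ ^ L * Real.exp (∑ l, (-(x l) ^ 2 / 2)) := by
          rw [Finset.prod_mul_distrib, Finset.prod_const, ← Real.exp_sum,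
            Finset.card_univ, Fintype.card_fin]
      _ = K * Real.exp (-(∑ l, (x l) ^ 2) / 2) := by
          rw [hKeq]
          congr 1
          rw [← Finset.sum_div, Finset.sum_neg_distrib]
  -- Step 5: volume of the box
  have hvol : volume B = ENNReal.ofReal ((2 * ε) ^ L) := by
    rw [hB, volume_pi_pi]
    have hv : ∀ l : Fin L, volume (I l) = ENNReal.ofReal (2 * ε) := by
      intro l
      rw [hI]
      simp only [Real.volume_Icc]
      congr 1
      ring
    rw [Finset.prod_congr rfl fun l _ => hv l, Finset.prod_const,
      Finset.card_univ, Fintype.card_fin, ← ENNReal.ofReal_pow (by positivity)]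
  -- Step 6: pointwise lower bound on the box
  have hpoint : ∀ x ∈ B,
      K * Real.exp (-(∑ l, (u l) ^ 2) / 2) - K * Real.exp (-(1:ℝ)/2) * Real.sqrt L * ε ≤
        ∏ l, g (x l) := by
    intro x hx
    have hxl : ∀ l, |x l - u l| ≤ ε := by
      intro l
      have := hx l (Set.mem_univ l)
      rw [hI] at this
      rw [abs_le]
      constructor <;> [linarith [this.1]; linarith [this.2]]
    have hexp := gsb_exp_lower u x ε hε.le hxl
    rw [hprod x]
    nlinarith [hKpos, Real.exp_nonneg (-(∑ l, (x l) ^ 2) / 2)]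
  -- Conclude
  have hBmeas : MeasurableSet B := MeasurableSet.univ_pi fun l => measurableSet_Icc
  have hBfin : volume B ≠ ⊤ := by rw [hvol]; exact ENNReal.ofReal_ne_top
  have hint : IntegrableOn (fun x : Fin L → ℝ => ∏ l, g (x l)) B volume :=
    (Integrable.fintype_prod (f := fun _ : Fin L => g)
      fun _ => integrable_gaussianPDFReal 0 1).integrableOn
  have hlow := setIntegral_ge_of_const_le_real hBmeas hBfin hpoint hint
  rw [measureReal_def, hvol, ENNReal.toReal_ofReal (by positivity)] at hlow
  rw [htoReal, hfub]
  calc (2 * ε) ^ L *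
        (K * Real.exp (-(∑ l, (u l) ^ 2) / 2) - K * Real.exp (-(1:ℝ)/2) * Real.sqrt L * ε)
      = (K * Real.exp (-(∑ l, (u l) ^ 2) / 2) - K * Real.exp (-(1:ℝ)/2) * Real.sqrt L * ε) *
        (2 * ε) ^ L := mul_comm _ _
    _ ≤ ∫ x in B, ∏ l, g (x l) := hlow
end

section
/- Let L ≥ 1 and M ≥ 1, let Z_1, …, Z_M be i.i.d. standard Gaussian vectors in ℝ^L (each with i.i.d. N(0,1) coordinates), let u ∈ ℝ^L, let ε > 0, and write f(u) = (2π)^{−L/2} e^{−‖u‖₂²/2}. If (2π)^{−L/2} e^{−1/2} √L · ε ≤ f(u)/2, then P( min_{1≤m≤M} max_{1≤l≤L} |Z_{m,l} − u_l| ≤ ε ) ≥ 1 − exp( −M · (f(u)/2) · (2ε)^L ). -/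
open MeasureTheory ProbabilityTheory Real
open Real

lemma aux_texp {t : ℝ} : t * Real.exp (-(t^2/2)) ≤ Real.exp (-(1:ℝ)/2) := by
  have h1 : t ≤ Real.exp (t - 1) := by
    have := Real.add_one_le_exp (t - 1); linarith
  have h2 : Real.exp (t - 1) ≤ Real.exp ((t^2 - 1)/2) := by
    apply Real.exp_le_exp.2; nlinarith [sq_nonneg (t - 1)]
  calc t * Real.exp (-(t^2/2)) ≤ Real.exp ((t^2-1)/2) * Real.exp (-(t^2/2)) := by
        exact mul_le_mul_of_nonneg_right (h1.trans h2) (Real.exp_pos _).le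
    _ = Real.exp (-(1:ℝ)/2) := by rw [← Real.exp_add]; ring_nf

lemma aux_lip (a b : ℝ) (hab : a ≤ b) :
    Real.exp (-(a^2/2)) - Real.exp (-(1:ℝ)/2) * (b - a) ≤ Real.exp (-(b^2/2)) := by
  set f : ℝ → ℝ := fun r => Real.exp (-(r^2/2)) with hf
  have hder : ∀ x : ℝ, HasDerivAt f (Real.exp (-(x^2/2)) * -(2 * x^1 / 2)) x := by
    intro x
    exact (((hasDerivAt_pow 2 x).div_const 2).neg).exp
  have hdiff : Differentiable ℝ f := fun x => (hder x).differentiableAt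
  have hbound : ∀ x : ℝ, ‖deriv f x‖₊ ≤ (Real.exp (-(1:ℝ)/2)).toNNReal := by
    intro x
    rw [← NNReal.coe_le_coe, coe_nnnorm, Real.coe_toNNReal _ (Real.exp_pos _).le]
    rw [(hder x).deriv]
    rw [Real.norm_eq_abs]
    have h2 : 2 * x^1 / 2 = x := by ring
    have : |Real.exp (-(x^2/2)) * -(2 * x^1 / 2)| = |x| * Real.exp (-(|x|^2/2)) := by
      rw [abs_mul, abs_neg, abs_exp, sq_abs, h2, mul_comm]
    rw [this]
    exact aux_texp
  have hlip := lipschitzWith_of_nnnorm_deriv_le hdiff hbound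
  have := hlip.dist_le_mul a b
  rw [Real.dist_eq, Real.dist_eq, Real.coe_toNNReal _ (Real.exp_pos _).le,
    abs_sub_comm a b, abs_of_nonneg (by linarith : (0:ℝ) ≤ b - a)] at this
  have h1 := (abs_le.1 this).2
  simp only [hf] at h1 ⊢
  linarith

lemma aux_core (L : ℕ) (u : Fin L → ℝ) (ε : ℝ) (hε : 0 < ε) (fu : ℝ)
    (hfu : fu = (2 * Real.pi) ^ (-(L : ℝ) / 2) * Real.exp (-(∑ l, (u l) ^ 2) / 2))
    (hsmall : (2 * Real.pi) ^ (-(L : ℝ) / 2) * Real.exp (-(1 : ℝ) / 2) * Real.sqrt L * ε ≤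
      fu / 2) :
    fu / 2 ≤ (2 * Real.pi) ^ (-(L : ℝ) / 2) * Real.exp (-(∑ l, (|u l| + ε) ^ 2) / 2) := by
  set K : ℝ := (2 * Real.pi) ^ (-(L : ℝ) / 2) with hKdef
  have hK : 0 < K := Real.rpow_pos_of_pos (by positivity) _
  set a : ℝ := Real.sqrt (∑ l, (u l) ^ 2) with hadef
  set b : ℝ := Real.sqrt (∑ l, (|u l| + ε) ^ 2) with hbdef
  have ha2 : a ^ 2 = ∑ l, (u l) ^ 2 := Real.sq_sqrt (by positivity)
  have hb2 : b ^ 2 = ∑ l, (|u l| + ε) ^ 2 := Real.sq_sqrt (by positivity)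
  have hab : a ≤ b := by
    apply Real.sqrt_le_sqrt
    apply Finset.sum_le_sum
    intro l _
    rw [← sq_abs (u l)]
    have := abs_nonneg (u l)
    nlinarith
  have hba : b ≤ a + Real.sqrt L * ε := by
    have key := norm_add_le (E := EuclideanSpace ℝ (Fin L))
      (WithLp.toLp 2 (fun l => |u l|)) (WithLp.toLp 2 (fun _ => ε))
    rw [EuclideanSpace.norm_eq, EuclideanSpace.norm_eq, EuclideanSpace.norm_eq] at key
    simp only [PiLp.add_apply, PiLp.toLp_apply, Real.norm_eq_abs, abs_abs, sq_abs] at key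
    have h1 : Real.sqrt (∑ _l : Fin L, ε ^ 2) = Real.sqrt L * ε := by
      rw [Finset.sum_const, Finset.card_univ, Fintype.card_fin, nsmul_eq_mul,
        Real.sqrt_mul (Nat.cast_nonneg L), Real.sqrt_sq hε.le]
    rw [h1] at key
    exact key
  have hlip := aux_lip a b hab
  have hfu' : fu = K * Real.exp (-(a ^ 2 / 2)) := by
    rw [hfu, ha2]; ring_nf
  have e1 : Real.exp (-(∑ l, (|u l| + ε) ^ 2) / 2) = Real.exp (-(b ^ 2 / 2)) := by
    rw [hb2, neg_div]
  have hba' : 0 ≤ b - a := by linarith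
  have hsmall' : K * Real.exp (-(1:ℝ)/2) * (b - a) ≤ fu / 2 := by
    calc K * Real.exp (-(1:ℝ)/2) * (b - a) ≤ K * Real.exp (-(1:ℝ)/2) * (Real.sqrt L * ε) := by
          apply mul_le_mul_of_nonneg_left (by linarith) (by positivity)
      _ = K * Real.exp (-(1:ℝ)/2) * Real.sqrt L * ε := by ring
      _ ≤ fu / 2 := hsmall
  have h3 := mul_le_mul_of_nonneg_left hlip hK.le
  rw [mul_sub] at h3
  rw [e1, hfu']
  rw [hfu'] at hsmall'
  ring_nf at h3 hsmall' ⊢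
  linarith

open MeasureTheory ProbabilityTheory

lemma aux_coord {Ω : Type*} [MeasurableSpace Ω] (P : Measure Ω)
    (X : Ω → ℝ) (hX : Measurable X)
    (hg : Measure.map X P = ProbabilityTheory.gaussianReal 0 1)
    (c ε : ℝ) (hε : 0 < ε) :
    ENNReal.ofReal (2 * ε * gaussianPDFReal 0 1 (|c| + ε)) ≤
      P (X ⁻¹' Set.Icc (c - ε) (c + ε)) := by
  have h1 : P (X ⁻¹' Set.Icc (c - ε) (c + ε))
      = (Measure.map X P) (Set.Icc (c - ε) (c + ε)) :=
    (Measure.map_apply hX measurableSet_Icc).symm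
  rw [h1, hg, gaussianReal_apply 0 one_ne_zero]
  have hd0 : 0 ≤ gaussianPDFReal 0 1 (|c| + ε) := gaussianPDFReal_nonneg 0 1 _
  calc ENNReal.ofReal (2 * ε * gaussianPDFReal 0 1 (|c| + ε))
      = ENNReal.ofReal (gaussianPDFReal 0 1 (|c| + ε)) * volume (Set.Icc (c - ε) (c + ε)) := by
        rw [Real.volume_Icc, show c + ε - (c - ε) = 2 * ε by ring,
          ← ENNReal.ofReal_mul hd0, mul_comm]
    _ = ∫⁻ _ in Set.Icc (c - ε) (c + ε), ENNReal.ofReal (gaussianPDFReal 0 1 (|c| + ε)) :=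
        (setLIntegral_const _ _).symm
    _ ≤ ∫⁻ x in Set.Icc (c - ε) (c + ε), gaussianPDF 0 1 x := by
        apply setLIntegral_mono ((measurable_gaussianPDFReal 0 1).ennreal_ofReal)
        intro x hx
        apply ENNReal.ofReal_le_ofReal
        unfold gaussianPDFReal
        simp only [NNReal.coe_one, mul_one, sub_zero]
        apply mul_le_mul_of_nonneg_left _ (by positivity)
        apply Real.exp_le_exp.2
        have h2 : x ^ 2 ≤ (|c| + ε) ^ 2 := by
          rcases hx with ⟨hx1, hx2⟩
          have := le_abs_self c
          have := neg_abs_le c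
          apply sq_le_sq' <;> linarith
        linarith



/-- For `Z_1, …, Z_M` i.i.d. standard Gaussian vectors in `ℝ^L`, `u ∈ ℝ^L`,
`ε > 0` with `(2π)^{−L/2} e^{−1/2} √L ε ≤ f(u)/2` where `f(u) = (2π)^{−L/2} e^{−‖u‖₂²/2}`,
one has `P(min_m max_l |Z_{m,l} − u_l| ≤ ε) ≥ 1 − exp(−M (f(u)/2) (2ε)^L)`. -/
theorem gaussian_resample_hit_prob {Ω : Type*} [MeasurableSpace Ω]
    (P : Measure Ω) [IsProbabilityMeasure P]
    (L M : ℕ) (hL : 1 ≤ L) (hM : 1 ≤ M)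
    (Z : Fin M → Ω → Fin L → ℝ)
    (hmeas : ∀ (m : Fin M) (l : Fin L), Measurable (fun ω => Z m ω l))
    (hindep : ProbabilityTheory.iIndepFun
      (fun (p : Fin M × Fin L) ω => Z p.1 ω p.2) P)
    (hgauss : ∀ (m : Fin M) (l : Fin L),
      Measure.map (fun ω => Z m ω l) P = ProbabilityTheory.gaussianReal 0 1)
    (u : Fin L → ℝ) (ε : ℝ) (hε : 0 < ε)
    (fu : ℝ) (hfu : fu = (2 * Real.pi) ^ (-(L : ℝ) / 2) * Real.exp (-(∑ l, (u l) ^ 2) / 2))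
    (hsmall : (2 * Real.pi) ^ (-(L : ℝ) / 2) * Real.exp (-(1 : ℝ) / 2) * Real.sqrt L * ε ≤
      fu / 2) :
    1 - Real.exp (-(M : ℝ) * (fu / 2) * (2 * ε) ^ L) ≤
      (P {ω | ∃ m, ∀ l, |Z m ω l - u l| ≤ ε}).toReal := by
  classical
  set A : Fin M → Set Ω :=
    fun m => ⋂ l, (fun ω => Z m ω l) ⁻¹' Set.Icc (u l - ε) (u l + ε) with hA
  set g : ℝ := fu / 2 * (2 * ε) ^ L with hg
  -- measurability of A
  have hAmeas : ∀ m, MeasurableSet (A m) :=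
    fun m => MeasurableSet.iInter fun l => (hmeas m l) measurableSet_Icc
  -- Step A: per-coordinate bound
  have hcoord : ∀ (m : Fin M) (l : Fin L),
      ENNReal.ofReal (2 * ε * gaussianPDFReal 0 1 (|u l| + ε)) ≤
        P ((fun ω => Z m ω l) ⁻¹' Set.Icc (u l - ε) (u l + ε)) :=
    fun m l => aux_coord P _ (hmeas m l) (hgauss m l) (u l) ε hε
  -- Step B: product over coordinates
  have hAeq : ∀ m, P (A m) =
      ∏ l, P ((fun ω => Z m ω l) ⁻¹' Set.Icc (u l - ε) (u l + ε)) := by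
    intro m
    have hs : ∀ p ∈ ({m} ×ˢ (Finset.univ : Finset (Fin L))),
        MeasurableSet[(inferInstance : MeasurableSpace ℝ).comap (fun ω => Z p.1 ω p.2)]
          ((fun ω => Z p.1 ω p.2) ⁻¹' Set.Icc (u p.2 - ε) (u p.2 + ε)) :=
      fun p _ => ⟨Set.Icc (u p.2 - ε) (u p.2 + ε), measurableSet_Icc, rfl⟩
    have h2 := hindep.meas_biInter hs
    have hsets : (⋂ p ∈ ({m} ×ˢ (Finset.univ : Finset (Fin L))),
        (fun ω => Z p.1 ω p.2) ⁻¹' Set.Icc (u p.2 - ε) (u p.2 + ε)) = A m := by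
      ext ω
      simp only [Set.mem_iInter, hA, Set.mem_preimage, Finset.mem_product,
        Finset.mem_singleton, Finset.mem_univ, and_true, Prod.forall]
      constructor
      · intro h l; exact h m l rfl
      · rintro h a b rfl; exact h b
    rw [hsets] at h2
    rw [h2, Finset.prod_product, Finset.prod_singleton]
  have hAlower : ∀ m, ENNReal.ofReal g ≤ P (A m) := by
    intro m
    have hprod_real : g ≤ ∏ l, (2 * ε * gaussianPDFReal 0 1 (|u l| + ε)) := by
      have hcore := aux_core L u ε hε fu hfu hsmall
      have hprod_eq : ∏ l, (2 * ε * gaussianPDFReal 0 1 (|u l| + ε))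
          = (2 * ε) ^ L * ((2 * Real.pi) ^ (-(L : ℝ) / 2) *
              Real.exp (-(∑ l, (|u l| + ε) ^ 2) / 2)) := by
        unfold gaussianPDFReal
        simp only [NNReal.coe_one, mul_one, sub_zero]
        rw [Finset.prod_mul_distrib, Finset.prod_const, Finset.card_univ, Fintype.card_fin,
          Finset.prod_mul_distrib, Finset.prod_const, Finset.card_univ, Fintype.card_fin,
          ← Real.exp_sum]
        have hKpow : ((Real.sqrt (2 * Real.pi))⁻¹) ^ L = (2 * Real.pi) ^ (-(L : ℝ) / 2) := by
          rw [inv_pow, Real.sqrt_eq_rpow, ← Real.rpow_natCast ((2 * Real.pi) ^ (1/(2:ℝ))) L,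
            ← Real.rpow_mul (by positivity), ← Real.rpow_neg (by positivity)]
          congr 1; ring
        have hsum : (∑ x, -(|u x| + ε) ^ 2 / 2) = (-∑ l : Fin L, (|u l| + ε) ^ 2) / 2 := by
          rw [← Finset.sum_div, Finset.sum_neg_distrib]
        rw [hKpow, hsum]
      rw [hprod_eq, hg]
      have h2L : (0:ℝ) ≤ (2 * ε) ^ L := by positivity
      nlinarith
    calc ENNReal.ofReal g ≤ ENNReal.ofReal (∏ l, (2 * ε * gaussianPDFReal 0 1 (|u l| + ε))) :=
          ENNReal.ofReal_le_ofReal hprod_real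
      _ = ∏ l, ENNReal.ofReal (2 * ε * gaussianPDFReal 0 1 (|u l| + ε)) :=
          ENNReal.ofReal_prod_of_nonneg (fun l _ => by
            have := gaussianPDFReal_nonneg 0 1 (|u l| + ε); positivity)
      _ ≤ ∏ l, P ((fun ω => Z m ω l) ⁻¹' Set.Icc (u l - ε) (u l + ε)) :=
          Finset.prod_le_prod' (fun l _ => hcoord m l)
      _ = P (A m) := (hAeq m).symm
  -- Step C: independence across m
  have hAcomap : ∀ (F : Finset (Fin M × Fin L)) (m : Fin M), (∀ l, (m, l) ∈ F) →
      MeasurableSet[MeasurableSpace.pi.comap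
        (fun ω (i : F) => Z (i : Fin M × Fin L).1 ω (i : Fin M × Fin L).2)] (A m) := by
    intro F m hmem
    refine ⟨⋂ l : Fin L, (fun gg : F → ℝ => gg ⟨(m, l), hmem l⟩) ⁻¹'
      Set.Icc (u l - ε) (u l + ε), ?_, ?_⟩
    · exact MeasurableSet.iInter fun l => (measurable_pi_apply _) measurableSet_Icc
    · rw [Set.preimage_iInter]; rfl
  have key : ∀ k : ℕ, k ≤ M →
      P (⋂ m ∈ Finset.univ.filter (fun m : Fin M => (m : ℕ) < k), (A m)ᶜ)
        = ∏ m ∈ Finset.univ.filter (fun m : Fin M => (m : ℕ) < k), P ((A m)ᶜ) := by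
    intro k
    induction k with
    | zero => intro _; simp
    | succ k ih =>
      intro hk1
      have hkM : k < M := hk1
      have ihk := ih hkM.le
      have hfil : Finset.univ.filter (fun m : Fin M => (m : ℕ) < k + 1)
          = insert (⟨k, hkM⟩ : Fin M) (Finset.univ.filter (fun m : Fin M => (m : ℕ) < k)) := by
        ext m
        simp only [Finset.mem_filter, Finset.mem_insert, Finset.mem_univ, true_and, Fin.ext_iff]
        omega
      have hnot : (⟨k, hkM⟩ : Fin M) ∉
          Finset.univ.filter (fun m : Fin M => (m : ℕ) < k) := by simp
      rw [hfil, Finset.prod_insert hnot, Finset.set_biInter_insert]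
      set S : Finset (Fin M × Fin L) := Finset.univ.filter (fun p => (p.1 : ℕ) = k) with hS
      set T : Finset (Fin M × Fin L) := Finset.univ.filter (fun p => (p.1 : ℕ) < k) with hT
      have hST : Disjoint S T := by
        rw [Finset.disjoint_left]
        intro p hp hp'
        simp only [hS, hT, Finset.mem_filter, Finset.mem_univ, true_and] at hp hp'
        omega
      have hIF := hindep.indepFun_finset S T hST (fun p => hmeas p.1 p.2)
      have hInd := (ProbabilityTheory.IndepFun_iff_Indep _ _ _).1 hIF
      have hm1 : MeasurableSet[MeasurableSpace.pi.comap
          (fun ω (i : S) => Z (i : Fin M × Fin L).1 ω (i : Fin M × Fin L).2)]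
          ((A ⟨k, hkM⟩)ᶜ) :=
        (hAcomap S ⟨k, hkM⟩ (fun l => by simp [hS])).compl
      have hm2 : MeasurableSet[MeasurableSpace.pi.comap
          (fun ω (i : T) => Z (i : Fin M × Fin L).1 ω (i : Fin M × Fin L).2)]
          (⋂ m ∈ Finset.univ.filter (fun m : Fin M => (m : ℕ) < k), (A m)ᶜ) := by
        apply Finset.measurableSet_biInter
        intro m hm
        simp only [Finset.mem_filter, Finset.mem_univ, true_and] at hm
        exact (hAcomap T m (fun l => by simp [hT, hm])).compl
      have h1 := (ProbabilityTheory.Indep_iff _ _ _).1 hInd _ _ hm1 hm2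
      rw [h1, ihk]
  have hfilM : Finset.univ.filter (fun m : Fin M => (m : ℕ) < M) = Finset.univ := by
    ext m; simp [m.isLt]
  have hprodC : P (⋂ m, (A m)ᶜ) = ∏ m, P ((A m)ᶜ) := by
    have := key M le_rfl
    rw [hfilM] at this
    simpa using this
  -- Final assembly
  have habs : ∀ y c : ℝ, |y - c| ≤ ε ↔ y ∈ Set.Icc (c - ε) (c + ε) := by
    intro y c
    rw [Set.mem_Icc, abs_le]
    constructor <;> rintro ⟨h1, h2⟩ <;> constructor <;> linarith
  have hEeq : {ω | ∃ m, ∀ l, |Z m ω l - u l| ≤ ε} = ⋃ m, A m := by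
    ext ω
    simp only [Set.mem_setOf_eq, Set.mem_iUnion, hA, Set.mem_iInter, Set.mem_preimage]
    exact exists_congr fun m => forall_congr' fun l => habs _ _
  have hEmeas : MeasurableSet (⋃ m, A m) := MeasurableSet.iUnion fun m => hAmeas m
  have hcompl : (⋃ m, A m)ᶜ = ⋂ m, (A m)ᶜ := Set.compl_iUnion _
  -- per-m real bound
  have hperm : ∀ m, (P ((A m)ᶜ)).toReal ≤ Real.exp (-g) := by
    intro m
    have hq : g ≤ (P (A m)).toReal :=
      (ENNReal.ofReal_le_iff_le_toReal (measure_ne_top P _)).1 (hAlower m)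
    have hc : (P ((A m)ᶜ)).toReal = 1 - (P (A m)).toReal := by
      rw [measure_compl (hAmeas m) (measure_ne_top P _), measure_univ,
        ENNReal.toReal_sub_of_le prob_le_one ENNReal.one_ne_top, ENNReal.toReal_one]
    have := Real.add_one_le_exp (-g)
    rw [hc]; linarith
  have hprodbound : (P (⋂ m, (A m)ᶜ)).toReal ≤ Real.exp (-(M : ℝ) * (fu / 2) * (2 * ε) ^ L) := by
    rw [hprodC, ENNReal.toReal_prod]
    calc ∏ m : Fin M, (P ((A m)ᶜ)).toReal ≤ ∏ _m : Fin M, Real.exp (-g) :=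
          Finset.prod_le_prod (fun m _ => ENNReal.toReal_nonneg) (fun m _ => hperm m)
      _ = Real.exp (-g) ^ M := by
          rw [Finset.prod_const, Finset.card_univ, Fintype.card_fin]
      _ = Real.exp (-(M : ℝ) * (fu / 2) * (2 * ε) ^ L) := by
          rw [← Real.exp_nat_mul]
          congr 1
          rw [hg]; ring
  have htoReal : (P ((⋃ m, A m)ᶜ)).toReal = 1 - (P (⋃ m, A m)).toReal := by
    rw [measure_compl hEmeas (measure_ne_top P _), measure_univ,
      ENNReal.toReal_sub_of_le prob_le_one ENNReal.one_ne_top, ENNReal.toReal_one]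
  rw [hEeq]
  rw [hcompl] at htoReal
  linarith [hprodbound, htoReal.symm.le, htoReal.le]
end
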